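/- arXiv:2110.05349 — 7 statements merged into one kernel-verified Lean document; each statement's English description precedes it below -/
import Mathlib

section
/- For any r ≥ 2, if an r-graph H is positive, then its Levi graph L(H) is a positive graph. (In particular, for every bounded measurable symmetric f:[0,1]²→ℝ, one has t_{L(H)}(f) = t_H(h), where h(x₁,…,x_r) := ∫ f(x₁,y) f(x₂,y) ⋯ f(x_r,y) dy.) -/
open MeasureTheory
open scoped Classical

noncomputable section

/-- Homomorphism density of a symmetric kernel `f` in a finite simple graph `G`:
`t_G(f) = ∫ ∏_{{u,v} ∈ E(G)} f(x_u, x_v) dx`, with respect to Lebesgue measure on `[0,1]`. -/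
def graphDensity {V : Type} [Fintype V] (G : SimpleGraph V)
    (f : unitInterval → unitInterval → ℝ) (hf : ∀ a b, f a b = f b a) : ℝ :=
  ∫ x : V → unitInterval,
    ∏ e ∈ G.edgeFinset,
      Sym2.lift ⟨fun u v => f (x u) (x v), fun u v => hf (x u) (x v)⟩ e

/-- A finite simple graph is positive if `t_G(f) ≥ 0` for every bounded measurable
symmetric kernel `f : [0,1]² → ℝ`. -/
def GraphPositive {V : Type} [Fintype V] (G : SimpleGraph V) : Prop :=
  ∀ (f : unitInterval → unitInterval → ℝ) (hf : ∀ a b, f a b = f b a),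
    Measurable (fun p : unitInterval × unitInterval => f p.1 p.2) →
    (∃ C, ∀ a b, |f a b| ≤ C) →
    0 ≤ graphDensity G f hf

end
/-- Homomorphism density of a symmetric `r`-variable kernel in an `r`-graph whose
edges are indexed by `E` and given as (injective) `r`-tuples of vertices:
`t_H(f) = ∫ ∏_{e ∈ E(H)} f(x_{e 0}, …, x_{e (r-1)}) dx`. -/
noncomputable def hypDensity {V E : Type} [Fintype V] [Fintype E] (r : ℕ)
    (edge : E → Fin r → V) (f : (Fin r → unitInterval) → ℝ) : ℝ :=
  ∫ x : V → unitInterval, ∏ e : E, f (fun i => x (edge e i))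

/-- An `r`-graph is positive if `t_H(f) ≥ 0` for every bounded measurable
symmetric kernel `f : [0,1]^r → ℝ`. -/
def HypPositive {V E : Type} [Fintype V] [Fintype E] (r : ℕ)
    (edge : E → Fin r → V) : Prop :=
  ∀ f : (Fin r → unitInterval) → ℝ,
    (∀ (σ : Equiv.Perm (Fin r)) (v : Fin r → unitInterval), f (v ∘ σ) = f v) →
    Measurable f → (∃ C, ∀ v, |f v| ≤ C) →
    0 ≤ hypDensity r edge f

/-- The vertex set of an edge of an `r`-graph. -/
noncomputable def hedgeSet {V E : Type} [Fintype V] (r : ℕ) (edge : E → Fin r → V) (e : E) :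
    Finset V :=
  Finset.image (edge e) Finset.univ
/-- The Levi (incidence) graph of an `r`-graph: the bipartite graph with parts
`V` and `E`, where `v` and `e` are adjacent iff `v` is incident to `e`. -/
def Levi {V E : Type} (r : ℕ) (edge : E → Fin r → V) : SimpleGraph (V ⊕ E) :=
  SimpleGraph.fromRel (fun a b => ∃ v e, a = Sum.inl v ∧ b = Sum.inr e ∧ ∃ i, edge e i = v)


section LeviAux

open MeasureTheory
variable {V E : Type} [Fintype V] [Fintype E] {r : ℕ}

omit [Fintype V] [Fintype E] in
lemma levi_edgeFinset' [Fintype V] [Fintype E] (edge : E → Fin r → V) :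
    (Levi r edge).edgeFinset =
      Finset.image (fun p : E × Fin r => s(Sum.inl (edge p.1 p.2), (Sum.inr p.1 : V ⊕ E)))
        Finset.univ := by
  ext s
  induction s using Sym2.ind with
  | _ a b =>
    rw [SimpleGraph.mem_edgeFinset]
    simp only [SimpleGraph.mem_edgeFinset, SimpleGraph.mem_edgeSet, Levi,
      SimpleGraph.fromRel_adj, Finset.mem_image, Finset.mem_univ, true_and, Prod.exists]
    constructor
    · rintro ⟨hne, h | h⟩
      · obtain ⟨v, e, rfl, rfl, i, rfl⟩ := h
        exact ⟨e, i, rfl⟩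
      · obtain ⟨v, e, rfl, rfl, i, rfl⟩ := h
        exact ⟨e, i, Sym2.eq_swap⟩
    · rintro ⟨e, i, h⟩
      rw [Sym2.eq_iff] at h
      rcases h with ⟨h1, h2⟩ | ⟨h1, h2⟩
      · subst h1; subst h2
        exact ⟨by simp, Or.inl ⟨_, _, rfl, rfl, i, rfl⟩⟩
      · subst h1; subst h2
        exact ⟨by simp, Or.inr ⟨_, _, rfl, rfl, i, rfl⟩⟩

omit [Fintype V] [Fintype E] in
lemma levi_map_inj' (edge : E → Fin r → V) (hinj : ∀ e, Function.Injective (edge e)) :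
    Function.Injective
      (fun p : E × Fin r => s(Sum.inl (edge p.1 p.2), (Sum.inr p.1 : V ⊕ E))) := by
  rintro ⟨e, i⟩ ⟨e', i'⟩ h
  simp only [Sym2.eq_iff] at h
  rcases h with ⟨h1, h2⟩ | ⟨h1, h2⟩
  · obtain rfl : e = e' := Sum.inr.inj h2
    obtain rfl : i = i' := hinj e (Sum.inl.inj h1)
    rfl
  · exact absurd h1 (by simp)

lemma levi_density_eq (edge : E → Fin r → V) (hinj : ∀ e, Function.Injective (edge e))
    (f : unitInterval → unitInterval → ℝ) (hf : ∀ a b, f a b = f b a)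
    (hmeas : Measurable (fun p : unitInterval × unitInterval => f p.1 p.2))
    (hbd : ∃ C, ∀ a b, |f a b| ≤ C) :
    graphDensity (Levi r edge) f hf =
      hypDensity r edge (fun v => ∫ y : unitInterval, ∏ i : Fin r, f (v i) y) := by
  classical
  obtain ⟨C, hC⟩ := hbd
  have hC0 : 0 ≤ C := le_trans (abs_nonneg _) (hC 0 0)
  have h1 : graphDensity (Levi r edge) f hf =
      ∫ x : (V ⊕ E) → unitInterval,
        ∏ e : E, ∏ i : Fin r, f (x (Sum.inl (edge e i))) (x (Sum.inr e)) := by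
    unfold graphDensity
    congr 1; funext x
    rw [levi_edgeFinset' edge,
      Finset.prod_image (fun p _ q _ h => levi_map_inj' edge hinj h)]
    rw [Fintype.prod_prod_type]
    simp
  rw [h1]
  have hvp : MeasurePreserving
      (MeasurableEquiv.sumPiEquivProdPi (fun _ : V ⊕ E => unitInterval)).symm volume volume :=
    volume_measurePreserving_sumPiEquivProdPi_symm _
  have h2 : (∫ x : (V ⊕ E) → unitInterval,
        ∏ e : E, ∏ i : Fin r, f (x (Sum.inl (edge e i))) (x (Sum.inr e)))
      = ∫ z : (V → unitInterval) × (E → unitInterval),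
          ∏ e : E, ∏ i : Fin r, f (z.1 (edge e i)) (z.2 e) := by
    rw [← hvp.integral_comp']
    rfl
  rw [h2]
  have hmeasg : Measurable (fun z : (V → unitInterval) × (E → unitInterval) =>
      ∏ e : E, ∏ i : Fin r, f (z.1 (edge e i)) (z.2 e)) := by
    refine Finset.measurable_prod _ fun e _ => Finset.measurable_prod _ fun i _ => ?_
    have hz : Measurable fun z : (V → unitInterval) × (E → unitInterval) =>
        (z.1 (edge e i), z.2 e) :=
      ((measurable_pi_apply _).comp measurable_fst).prodMk
        ((measurable_pi_apply _).comp measurable_snd)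
    exact hmeas.comp hz
  have hbdg : ∀ z : (V → unitInterval) × (E → unitInterval),
      ‖∏ e : E, ∏ i : Fin r, f (z.1 (edge e i)) (z.2 e)‖ ≤ (C ^ r) ^ Fintype.card E := by
    intro z
    rw [Real.norm_eq_abs, Finset.abs_prod]
    calc ∏ e : E, |∏ i : Fin r, f (z.1 (edge e i)) (z.2 e)|
        ≤ ∏ e : E, C ^ r := by
          refine Finset.prod_le_prod (fun _ _ => abs_nonneg _) fun e _ => ?_
          rw [Finset.abs_prod]
          calc ∏ i : Fin r, |f (z.1 (edge e i)) (z.2 e)| ≤ ∏ i : Fin r, C :=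
                Finset.prod_le_prod (fun _ _ => abs_nonneg _) fun i _ => hC _ _
            _ = C ^ r := by simp
      _ = (C ^ r) ^ Fintype.card E := by simp
  have hint : Integrable (fun z : (V → unitInterval) × (E → unitInterval) =>
      ∏ e : E, ∏ i : Fin r, f (z.1 (edge e i)) (z.2 e)) := by
    exact (integrable_const ((C ^ r) ^ Fintype.card E)).mono'
      hmeasg.aestronglyMeasurable (Filter.Eventually.of_forall hbdg)
  rw [Measure.volume_eq_prod] at hint ⊢
  rw [integral_prod _ hint]
  unfold hypDensity
  refine integral_congr_ae (Filter.Eventually.of_forall fun a => ?_)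
  calc (∫ b : E → unitInterval, ∏ e : E, ∏ i : Fin r, f (a (edge e i)) (b e))
      = ∏ e : E, ∫ y : unitInterval, ∏ i : Fin r, f (a (edge e i)) y :=
        integral_fintype_prod_eq_prod (ι := E) (fun e y => ∏ i : Fin r, f (a (edge e i)) y)
    _ = _ := rfl

end LeviAux

/-- For `r ≥ 2`, if an `r`-graph `H` is positive then its Levi graph is positive;
in particular, for every bounded measurable symmetric `f : [0,1]² → ℝ`,
`t_{L(H)}(f) = t_H(h)` where `h(x₁,…,x_r) = ∫ f(x₁,y) f(x₂,y) ⋯ f(x_r,y) dy`. -/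
theorem levi_positive_of_hypergraph_positive
    {V E : Type} [Fintype V] [Fintype E] (r : ℕ) (hr : 2 ≤ r)
    (edge : E → Fin r → V) (hinj : ∀ e, Function.Injective (edge e)) :
    (HypPositive r edge → GraphPositive (Levi r edge)) ∧
    (∀ (f : unitInterval → unitInterval → ℝ) (hf : ∀ a b, f a b = f b a),
      Measurable (fun p : unitInterval × unitInterval => f p.1 p.2) →
      (∃ C, ∀ a b, |f a b| ≤ C) →
      graphDensity (Levi r edge) f hf =
        hypDensity r edge (fun v => ∫ y : unitInterval, ∏ i : Fin r, f (v i) y)) := by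
  constructor
  · intro hp f hf hmeas hbd
    rw [levi_density_eq edge hinj f hf hmeas hbd]
    obtain ⟨C, hC⟩ := hbd
    have hC0 : 0 ≤ C := le_trans (abs_nonneg _) (hC 0 0)
    refine hp _ ?_ ?_ ⟨C ^ r, ?_⟩
    · intro σ v
      exact integral_congr_ae (Filter.Eventually.of_forall fun y =>
        Equiv.prod_comp σ fun i => f (v i) y)
    · have hF : Measurable (fun p : (Fin r → unitInterval) × unitInterval =>
          ∏ i : Fin r, f (p.1 i) p.2) := by
        refine Finset.measurable_prod _ fun i _ => ?_
        have hz : Measurable fun p : (Fin r → unitInterval) × unitInterval =>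
            (p.1 i, p.2) :=
          ((measurable_pi_apply _).comp measurable_fst).prodMk measurable_snd
        exact hmeas.comp hz
      exact hF.stronglyMeasurable.integral_prod_right'.measurable
    · intro v
      rw [← Real.norm_eq_abs]
      calc ‖∫ y : unitInterval, ∏ i : Fin r, f (v i) y‖
          ≤ C ^ r * (volume (Set.univ : Set unitInterval)).toReal := by
            refine norm_integral_le_of_norm_le_const
              (Filter.Eventually.of_forall fun y => ?_)
            rw [Real.norm_eq_abs, Finset.abs_prod]
            calc ∏ i : Fin r, |f (v i) y| ≤ ∏ i : Fin r, C :=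
                  Finset.prod_le_prod (fun _ _ => abs_nonneg _) fun i _ => hC _ _
              _ = C ^ r := by simp
        _ = C ^ r := by simp
  · intro f hf hmeas hbd
    exact levi_density_eq edge hinj f hf hmeas hbd
end

section
/- An r-graph that has an odd edge is not positive. -/
open MeasureTheory
open scoped Classical

/-- `g : V → V` is an endomorphism of the `r`-graph with edges `edge`:
it maps vertices to vertices so that (the vertex set of) every edge is mapped
onto (the vertex set of) an edge. -/
def IsHypEndo {V E : Type} [Fintype V] (r : ℕ) (edge : E → Fin r → V) (g : V → V) : Prop :=
  ∀ e : E, ∃ e' : E, Finset.image g (hedgeSet r edge e) = hedgeSet r edge e'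

/-- An edge `e` of an `r`-graph is odd if for every endomorphism `π` of the graph,
`e` is the image of exactly one edge. -/
def OddEdge {V E : Type} [Fintype V] (r : ℕ) (edge : E → Fin r → V) (e : E) : Prop :=
  ∀ g : V → V, IsHypEndo r edge g →
    ∃! e' : E, Finset.image g (hedgeSet r edge e') = hedgeSet r edge e

private noncomputable def Gfun {V E : Type} [Fintype V] (r : ℕ)
    (edge : E → Fin r → V) (e₀ : E) (y : Fin r → V) : ℝ :=
  if ((Finset.image y Finset.univ).card = r ∧
      ∃ e', Finset.image y Finset.univ = hedgeSet r edge e')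
  then (if Finset.image y Finset.univ = hedgeSet r edge e₀ then -1 else 1) else 0

private lemma Gfun_abs_le {V E : Type} [Fintype V] (r : ℕ)
    (edge : E → Fin r → V) (e₀ : E) (y : Fin r → V) : |Gfun r edge e₀ y| ≤ 1 := by
  unfold Gfun; split_ifs <;> norm_num

private lemma Gfun_comp_perm {V E : Type} [Fintype V] (r : ℕ)
    (edge : E → Fin r → V) (e₀ : E) (z : Fin r → V) (σ : Equiv.Perm (Fin r)) :
    Gfun r edge e₀ (z ∘ σ) = Gfun r edge e₀ z := by
  have him : Finset.image (z ∘ σ) Finset.univ = Finset.image z Finset.univ := by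
    rw [← Finset.image_image]
    congr 1
    exact Finset.image_univ_equiv σ
  unfold Gfun
  rw [him]

private lemma prod_G_nonpos {V E : Type} [Fintype V] [Fintype E] (r : ℕ)
    (edge : E → Fin r → V) (e₀ : E) (hodd : OddEdge r edge e₀) (φ : V → V) :
    ∏ e : E, Gfun r edge e₀ (fun i => φ (edge e i)) ≤ 0 := by
  by_cases h0 : ∃ e, Gfun r edge e₀ (fun i => φ (edge e i)) = 0
  · obtain ⟨e, he⟩ := h0
    rw [Finset.prod_eq_zero (Finset.mem_univ e) he]
  push_neg at h0
  have hcond : ∀ e : E, ((Finset.image (fun i => φ (edge e i)) Finset.univ).card = r ∧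
      ∃ e', Finset.image (fun i => φ (edge e i)) Finset.univ = hedgeSet r edge e') := by
    intro e
    by_contra hc
    exact h0 e (by unfold Gfun; rw [if_neg hc])
  have himg : ∀ e : E, Finset.image φ (hedgeSet r edge e)
      = Finset.image (fun i => φ (edge e i)) Finset.univ := by
    intro e
    rw [hedgeSet, Finset.image_image]
    rfl
  have hendo : IsHypEndo r edge φ := by
    intro e
    obtain ⟨_, e', he'⟩ := hcond e
    exact ⟨e', by rw [himg e]; exact he'⟩
  obtain ⟨eh, heh, huniq⟩ := hodd φ hendo
  have key : ∀ e : E, (Finset.image (fun i => φ (edge e i)) Finset.univ = hedgeSet r edge e₀)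
      ↔ e = eh := by
    intro e
    constructor
    · intro h
      exact huniq e (show Finset.image φ (hedgeSet r edge e) = _ by rw [himg e]; exact h)
    · intro he
      rw [he, ← himg eh]
      exact heh
  have hprod : ∏ e : E, Gfun r edge e₀ (fun i => φ (edge e i)) = -1 := by
    rw [Finset.prod_eq_single eh]
    · unfold Gfun; rw [if_pos (hcond eh), if_pos ((key eh).mpr rfl)]
    · intro e _ hne
      unfold Gfun
      rw [if_pos (hcond e), if_neg (fun h => hne ((key e).mp h))]
    · exact fun h => absurd (Finset.mem_univ eh) h
  rw [hprod]; norm_num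

private lemma prod_G_id {V E : Type} [Fintype V] [Fintype E] (r : ℕ)
    (edge : E → Fin r → V) (hinj : ∀ e, Function.Injective (edge e))
    (e₀ : E) (hodd : OddEdge r edge e₀) :
    ∏ e : E, Gfun r edge e₀ (edge e) = -1 := by
  have hendo : IsHypEndo r edge id := fun e => ⟨e, by rw [Finset.image_id]⟩
  obtain ⟨eh, heh, huniq⟩ := hodd id hendo
  rw [Finset.image_id] at heh
  have he₀ : e₀ = eh := huniq e₀ (show Finset.image id _ = _ by rw [Finset.image_id])
  have hcard : ∀ e : E, (Finset.image (edge e) Finset.univ).card = r := by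
    intro e
    rw [Finset.card_image_of_injective _ (hinj e), Finset.card_univ, Fintype.card_fin]
  have hcond : ∀ e : E, ((Finset.image (edge e) Finset.univ).card = r ∧
      ∃ e', Finset.image (edge e) Finset.univ = hedgeSet r edge e') :=
    fun e => ⟨hcard e, e, rfl⟩
  have key : ∀ e : E, (hedgeSet r edge e = hedgeSet r edge e₀) ↔ e = e₀ := by
    intro e
    constructor
    · intro h
      rw [huniq e (show Finset.image id _ = _ by rw [Finset.image_id]; exact h), ← he₀]
    · rintro rfl; rfl
  rw [Finset.prod_eq_single e₀]
  · unfold Gfun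
    have h00 : Finset.image (edge e₀) Finset.univ = hedgeSet r edge e₀ := rfl
    rw [if_pos (hcond e₀), if_pos h00]
  · intro e _ hne
    unfold Gfun
    have hno : ¬ (Finset.image (edge e) Finset.univ = hedgeSet r edge e₀) := by
      intro h
      exact hne ((key e).mp h)
    rw [if_pos (hcond e), if_neg hno]
  · exact fun h => absurd (Finset.mem_univ e₀) h

private lemma exists_partition (V : Type) [Fintype V] [Nonempty V] :
    ∃ p : unitInterval → V,
      (∀ v : V, MeasurableSet (p ⁻¹' {v})) ∧ (∀ v : V, 0 < volume (p ⁻¹' {v})) := by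
  set n := Fintype.card V with hn
  have hn0 : 0 < n := Fintype.card_pos
  set ι := Fintype.equivFin V with hι
  set q : unitInterval → ℕ := fun t => min (⌊(t : ℝ) * n⌋₊) (n - 1) with hq
  have hqlt : ∀ t, q t < n := fun t => lt_of_le_of_lt (min_le_right _ _) (by omega)
  set p : unitInterval → V := fun t => ι.symm ⟨q t, hqlt t⟩ with hp
  have hqmeas : Measurable q := by
    apply Measurable.min
    · exact Nat.measurable_floor.comp ((measurable_subtype_coe).mul_const (n : ℝ))
    · exact measurable_const
  have hfib : ∀ v : V, p ⁻¹' {v} = q ⁻¹' {(ι v : ℕ)} := by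
    intro v
    ext t
    simp only [Set.mem_preimage, Set.mem_singleton_iff, hp]
    constructor
    · intro h
      have : (⟨q t, hqlt t⟩ : Fin n) = ι v := by
        rw [← h]; simp
      exact congrArg Fin.val this
    · intro h
      have : (⟨q t, hqlt t⟩ : Fin n) = ι v := Fin.ext h
      rw [this]; simp
  refine ⟨p, ?_, ?_⟩
  · intro v
    rw [hfib v]
    exact hqmeas (measurableSet_singleton _)
  · intro v
    set k : ℕ := (ι v : ℕ) with hk
    have hkn : k < n := (ι v).isLt
    have hsub : (Subtype.val ⁻¹' (Set.Ico ((k : ℝ)/n) ((k+1 : ℝ)/n)) : Set unitInterval)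
        ⊆ p ⁻¹' {v} := by
      intro t ht
      simp only [Set.mem_preimage, Set.mem_Ico] at ht
      rw [hfib v]
      simp only [Set.mem_preimage, Set.mem_singleton_iff]
      have hfl : ⌊(t : ℝ) * n⌋₊ = k := by
        rw [Nat.floor_eq_iff (mul_nonneg t.2.1 (by positivity))]
        constructor
        · rw [div_le_iff₀ (by positivity : (0:ℝ) < n)] at ht
          exact ht.1
        · have := ht.2
          rw [lt_div_iff₀ (by positivity : (0:ℝ) < n)] at this
          exact_mod_cast this
      show min (⌊(t : ℝ) * n⌋₊) (n-1) = k
      rw [hfl]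
      omega
    refine lt_of_lt_of_le ?_ (measure_mono hsub)
    have hmeassub : MeasurableSet (Subtype.val ⁻¹' (Set.Ico ((k : ℝ)/n) ((k+1 : ℝ)/n))
        : Set unitInterval) := measurable_subtype_coe measurableSet_Ico
    rw [Measure.Subtype.volume_def,
      MeasurableEmbedding.comap_apply (MeasurableEmbedding.subtype_coe measurableSet_Icc)]
    have himage : (Subtype.val '' (Subtype.val ⁻¹' (Set.Ico ((k : ℝ)/n) ((k+1 : ℝ)/n))
        : Set unitInterval)) = Set.Ico ((k : ℝ)/n) ((k+1 : ℝ)/n) := by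
      rw [Subtype.image_preimage_coe]
      apply Set.inter_eq_right.mpr
      intro x hx
      simp only [Set.mem_Ico] at hx
      constructor
      · have : (0:ℝ) ≤ (k : ℝ)/n := by positivity
        exact le_trans this hx.1
      · have h1 : ((k:ℝ)+1)/n ≤ 1 := by
          rw [div_le_one (by positivity : (0:ℝ) < n)]
          exact_mod_cast hkn
        exact le_of_lt (lt_of_lt_of_le hx.2 h1)
    rw [himage, Real.volume_Ico]
    apply ENNReal.ofReal_pos.mpr
    have hd : ((k:ℝ)+1)/n - (k:ℝ)/n = 1/n := by
      field_simp
      ring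
    rw [hd]
    positivity

/-- **Proposition 3.** An `r`-graph that has an odd edge is not positive. -/
theorem not_positive_of_oddEdge
    {V E : Type} [Fintype V] [Fintype E] (r : ℕ)
    (edge : E → Fin r → V) (hinj : ∀ e, Function.Injective (edge e))
    (e₀ : E) (hodd : OddEdge r edge e₀) :
    ¬ HypPositive r edge := by
  intro hpos
  by_cases hV : Nonempty V
  · obtain ⟨p, hpm, hppos⟩ := exists_partition V
    letI : MeasurableSpace V := ⊤
    have hpmeas : Measurable p := measurable_to_countable' hpm
    set f : (Fin r → unitInterval) → ℝ := fun y => Gfun r edge e₀ (fun i => p (y i)) with hfdef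
    have hsym : ∀ (σ : Equiv.Perm (Fin r)) (v : Fin r → unitInterval), f (v ∘ σ) = f v := by
      intro σ v
      show Gfun r edge e₀ (fun i => p ((v ∘ σ) i)) = Gfun r edge e₀ (fun i => p (v i))
      have h : (fun i => p ((v ∘ σ) i)) = (fun i => p (v i)) ∘ σ := rfl
      rw [h, Gfun_comp_perm]
    have hfmeas : Measurable f := by
      apply (measurable_of_countable (Gfun r edge e₀)).comp
      exact measurable_pi_lambda _ (fun i => hpmeas.comp (measurable_pi_apply i))
    have hfbd : ∃ C, ∀ v, |f v| ≤ C := ⟨1, fun v => Gfun_abs_le r edge e₀ _⟩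
    have h0 := hpos f hsym hfmeas hfbd
    set S : Set (V → unitInterval) := Set.univ.pi (fun v => p ⁻¹' {v}) with hS
    have hSmeas : MeasurableSet S := MeasurableSet.univ_pi (fun v => hpm v)
    have hSvol : 0 < (volume S).toReal := by
      apply ENNReal.toReal_pos _ (measure_ne_top _ _)
      rw [hS, volume_pi_pi]
      exact (CanonicallyOrderedAdd.prod_pos.mpr (fun v _ => hppos v)).ne'
    have hpt : ∀ x : V → unitInterval,
        (∏ e : E, f (fun i => x (edge e i))) ≤ - S.indicator (fun _ => (1:ℝ)) x := by
      intro x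
      by_cases hx : x ∈ S
      · have hid : ∀ v, p (x v) = v := fun v => hx v (Set.mem_univ v)
        have heq : ∀ e : E, f (fun i => x (edge e i)) = Gfun r edge e₀ (edge e) := by
          intro e
          show Gfun r edge e₀ (fun i => p (x (edge e i))) = _
          congr 1
          funext i
          exact hid (edge e i)
        calc ∏ e : E, f (fun i => x (edge e i))
            = ∏ e : E, Gfun r edge e₀ (edge e) := Finset.prod_congr rfl (fun e _ => heq e)
          _ = -1 := prod_G_id r edge hinj e₀ hodd
          _ ≤ - S.indicator (fun _ => (1:ℝ)) x := by
              rw [Set.indicator_of_mem hx]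
      · rw [Set.indicator_of_notMem hx]
        rw [neg_zero]
        exact prod_G_nonpos r edge e₀ hodd (fun v => p (x v))
    have hint1 : Integrable
        (fun x : V → unitInterval => ∏ e : E, f (fun i => x (edge e i))) volume := by
      apply Integrable.mono' (integrable_const (1:ℝ))
      · apply Measurable.aestronglyMeasurable
        apply Finset.measurable_prod
        intro e _
        exact hfmeas.comp (measurable_pi_lambda _ (fun i => measurable_pi_apply (edge e i)))
      · apply ae_of_all
        intro x
        rw [Real.norm_eq_abs, Finset.abs_prod]
        exact Finset.prod_le_one (fun e _ => abs_nonneg _) (fun e _ => Gfun_abs_le r edge e₀ _)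
    have hint2 : Integrable
        (fun x : V → unitInterval => - S.indicator (fun _ => (1:ℝ)) x) volume :=
      ((integrable_const (1:ℝ)).indicator hSmeas).neg
    have hle : hypDensity r edge f ≤ - (volume S).toReal := by
      rw [hypDensity]
      calc ∫ x : V → unitInterval, ∏ e : E, f (fun i => x (edge e i))
          ≤ ∫ x : V → unitInterval, - S.indicator (fun _ => (1:ℝ)) x :=
            integral_mono hint1 hint2 hpt
        _ = - (volume S).toReal := by
            rw [integral_neg]
            congr 1
            exact integral_indicator_one hSmeas
    linarith
  · haveI hVe : IsEmpty V := not_nonempty_iff.mp hV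
    have hre : IsEmpty (Fin r) := ⟨fun i => IsEmpty.elim hVe (edge e₀ i)⟩
    have hempty : ∀ e : E, hedgeSet r edge e = ∅ := by
      intro e
      rw [hedgeSet]
      haveI := hre
      simp
    obtain ⟨eh, heh, huniq⟩ := hodd id (fun e => ⟨e, by rw [Finset.image_id]⟩)
    have hE1 : ∀ e : E, e = eh := fun e => huniq e
      (show Finset.image id _ = _ by rw [Finset.image_id, hempty, hempty])
    have hcard : Fintype.card E = 1 := Fintype.card_eq_one_iff.mpr ⟨eh, fun e => hE1 e⟩
    have h0 := hpos (fun _ => (-1:ℝ)) (fun _ _ => rfl) measurable_const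
      ⟨1, fun v => by norm_num⟩
    rw [hypDensity] at h0
    simp only [Finset.prod_const, Finset.card_univ, hcard, pow_one, integral_const,
      measure_univ, ENNReal.toReal_one, probReal_univ, one_smul] at h0
    linarith
end

section
/- If every pair of vertices of an r-graph H is contained in at least one edge, then every endomorphism of H is an automorphism, and consequently every edge of H is odd. -/
open MeasureTheory
open scoped Classical

/-- If every pair of vertices of an `r`-graph `H` (without multiple edges) is
contained in at least one edge, then every endomorphism of `H` is an automorphism,
and consequently every edge of `H` is odd. -/
theorem endo_bijective_and_oddEdge_of_pair_cover
    {V E : Type} [Fintype V] [Fintype E] (r : ℕ)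
    (edge : E → Fin r → V) (hinj : ∀ e, Function.Injective (edge e))
    (hsimple : ∀ e e' : E, hedgeSet r edge e = hedgeSet r edge e' → e = e')
    (hcover : ∀ u v : V, ∃ e : E, u ∈ hedgeSet r edge e ∧ v ∈ hedgeSet r edge e) :
    (∀ g : V → V, IsHypEndo r edge g → Function.Bijective g) ∧
    (∀ e : E, OddEdge r edge e) := by
  have hcard : ∀ e : E, (hedgeSet r edge e).card = r := by
    intro e
    rw [hedgeSet, Finset.card_image_of_injective _ (hinj e), Finset.card_univ, Fintype.card_fin]
  have hbij : ∀ g : V → V, IsHypEndo r edge g → Function.Bijective g := by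
    intro g hg
    have hginj : Function.Injective g := by
      intro u v huv
      by_contra hne
      obtain ⟨e, hu, hv⟩ := hcover u v
      obtain ⟨e', he'⟩ := hg e
      have hcardim : (Finset.image g (hedgeSet r edge e)).card = (hedgeSet r edge e).card := by
        rw [he', hcard, hcard]
      have hio : Set.InjOn g (hedgeSet r edge e) := Finset.injOn_of_card_image_eq hcardim
      exact hne (hio hu hv huv)
    exact Finite.injective_iff_bijective.mp hginj
  refine ⟨hbij, ?_⟩
  intro e g hg
  have hginj := (hbij g hg).1
  -- the map sending each edge to its image edge
  choose φ hφ using hg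
  have hφinj : Function.Injective φ := by
    intro a b hab
    apply hsimple
    have h1 : Finset.image g (hedgeSet r edge a) = Finset.image g (hedgeSet r edge b) := by
      rw [hφ a, hφ b, hab]
    exact Finset.image_injective hginj h1
  have hφsurj : Function.Surjective φ := Finite.injective_iff_surjective.mp hφinj
  obtain ⟨e', he'⟩ := hφsurj e
  refine ⟨e', by simp only []; rw [hφ e', he'], ?_⟩
  intro y hy
  apply hφinj
  rw [he']
  apply hsimple
  rw [← hφ y, hy]
end

section
/- Let r ≥ 3 and let π be a homomorphism from the grid hypergraph H_r to a linear r-graph G. Then the homomorphic image of H_r under π is either isomorphic to H_r, or is a single edge of G, or contains a triangle. -/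
open MeasureTheory
open scoped Classical

/-- The edges of the `r × r` grid `r`-graph `H_r`: its vertices are the nodes of an
`r × r` grid, `Sum.inl i` is the `i`-th row and `Sum.inr j` is the `j`-th column. -/
def gridEdge (r : ℕ) : (Fin r ⊕ Fin r) → Fin r → Fin r × Fin r
  | Sum.inl i => fun j => (i, j)
  | Sum.inr j => fun i => (i, j)

/-- Membership helper for `hedgeSet`. -/
lemma mem_hedgeSet {V E : Type} [Fintype V] (r : ℕ) (edge : E → Fin r → V) (e : E)
    (k : Fin r) : edge e k ∈ hedgeSet r edge e :=
  Finset.mem_image_of_mem _ (Finset.mem_univ k)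

/-- Image of an edge set under a map. -/
lemma image_hedgeSet {V E X : Type} [Fintype V] (r : ℕ) (edge : E → Fin r → V) (e : E)
    (g : V → X) :
    Finset.image g (hedgeSet r edge e) = Finset.image (fun k => g (edge e k)) Finset.univ := by
  unfold hedgeSet
  rw [Finset.image_image]
  rfl

/-- Auxiliary combinatorial lemma: abstract version working with the edge images. -/
lemma grid_aux {W : Type} [DecidableEq W] (r : ℕ) (hr : 3 ≤ r)
    (S : (Fin r ⊕ Fin r) → Finset W)
    (hlin : ∀ e e', S e ≠ S e' → (S e ∩ S e').card ≤ 1)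
    (π : Fin r × Fin r → W)
    (hrow : ∀ i j, π (i, j) ∈ S (Sum.inl i))
    (hcol : ∀ i j, π (i, j) ∈ S (Sum.inr j))
    (hrinj : ∀ i, Function.Injective fun j => π (i, j))
    (hcinj : ∀ j, Function.Injective fun i => π (i, j))
    (hninj : ¬ Function.Injective π) :
    (∃ e0, ∀ e, S e = S e0) ∨
    (∃ e1 e2 e3, (S e1 ∩ S e2).card = 1 ∧ (S e1 ∩ S e3).card = 1 ∧
      (S e2 ∩ S e3).card = 1 ∧ S e1 ∩ S e2 ∩ S e3 = ∅) := by
  classical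
  -- triangle builder
  have htri : ∀ e1 e2 e3 (p12 p13 p23 : W), S e1 ≠ S e2 → S e1 ≠ S e3 → S e2 ≠ S e3 →
      p12 ∈ S e1 → p12 ∈ S e2 → p13 ∈ S e1 → p13 ∈ S e3 → p23 ∈ S e2 → p23 ∈ S e3 →
      p12 ≠ p13 →
      (∃ e1 e2 e3, (S e1 ∩ S e2).card = 1 ∧ (S e1 ∩ S e3).card = 1 ∧
        (S e2 ∩ S e3).card = 1 ∧ S e1 ∩ S e2 ∩ S e3 = ∅) := by
    intro e1 e2 e3 p12 p13 p23 h12 h13 h23 m1 m2 m3 m4 m5 m6 hne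
    refine ⟨e1, e2, e3, ?_, ?_, ?_, ?_⟩
    · exact le_antisymm (hlin _ _ h12)
        (Finset.card_pos.mpr ⟨p12, Finset.mem_inter.mpr ⟨m1, m2⟩⟩)
    · exact le_antisymm (hlin _ _ h13)
        (Finset.card_pos.mpr ⟨p13, Finset.mem_inter.mpr ⟨m3, m4⟩⟩)
    · exact le_antisymm (hlin _ _ h23)
        (Finset.card_pos.mpr ⟨p23, Finset.mem_inter.mpr ⟨m5, m6⟩⟩)
    · apply Finset.eq_empty_iff_forall_notMem.mpr
      intro x hx
      have hx1 : x ∈ S e1 := Finset.mem_inter.mp (Finset.mem_inter.mp hx).1 |>.1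
      have hx2 : x ∈ S e2 := Finset.mem_inter.mp (Finset.mem_inter.mp hx).1 |>.2
      have hx3 : x ∈ S e3 := (Finset.mem_inter.mp hx).2
      have e12 : x = p12 := Finset.card_le_one.mp (hlin _ _ h12) x
        (Finset.mem_inter.mpr ⟨hx1, hx2⟩) p12 (Finset.mem_inter.mpr ⟨m1, m2⟩)
      have e13 : x = p13 := Finset.card_le_one.mp (hlin _ _ h13) x
        (Finset.mem_inter.mpr ⟨hx1, hx3⟩) p13 (Finset.mem_inter.mpr ⟨m3, m4⟩)
      exact hne (e12.symm.trans e13)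
  -- two equal rows force everything equal
  have hDrow : ∀ a b, a ≠ b → S (Sum.inl a) = S (Sum.inl b) → ∃ e0, ∀ e, S e = S e0 := by
    intro a b hab h
    have hcolall : ∀ j, S (Sum.inr j) = S (Sum.inl a) := by
      intro j
      by_contra hne
      have h1 : π (a, j) ∈ S (Sum.inr j) ∩ S (Sum.inl a) :=
        Finset.mem_inter.mpr ⟨hcol a j, hrow a j⟩
      have h2 : π (b, j) ∈ S (Sum.inr j) ∩ S (Sum.inl a) :=
        Finset.mem_inter.mpr ⟨hcol b j, h ▸ hrow b j⟩
      have heq : π (a, j) = π (b, j) :=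
        Finset.card_le_one.mp (hlin _ _ hne) _ h1 _ h2
      exact hab (hcinj j heq)
    have hrowall : ∀ i, S (Sum.inl i) = S (Sum.inl a) := by
      intro i
      by_contra hne
      have hj0 : (⟨0, by omega⟩ : Fin r) ≠ ⟨1, by omega⟩ := by
        simp
      have h1 : π (i, ⟨0, by omega⟩) ∈ S (Sum.inl i) ∩ S (Sum.inl a) :=
        Finset.mem_inter.mpr ⟨hrow i _, (hcolall _) ▸ hcol i _⟩
      have h2 : π (i, ⟨1, by omega⟩) ∈ S (Sum.inl i) ∩ S (Sum.inl a) :=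
        Finset.mem_inter.mpr ⟨hrow i _, (hcolall _) ▸ hcol i _⟩
      have heq := Finset.card_le_one.mp (hlin _ _ hne) _ h1 _ h2
      exact hj0 (hrinj i heq)
    exact ⟨Sum.inl a, fun e => by cases e with
      | inl i => exact hrowall i
      | inr j => exact hcolall j⟩
  -- two equal columns force everything equal
  have hDcol : ∀ a b, a ≠ b → S (Sum.inr a) = S (Sum.inr b) → ∃ e0, ∀ e, S e = S e0 := by
    intro a b hab h
    have hrowall : ∀ i, S (Sum.inl i) = S (Sum.inr a) := by
      intro i
      by_contra hne
      have h1 : π (i, a) ∈ S (Sum.inl i) ∩ S (Sum.inr a) :=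
        Finset.mem_inter.mpr ⟨hrow i a, hcol i a⟩
      have h2 : π (i, b) ∈ S (Sum.inl i) ∩ S (Sum.inr a) :=
        Finset.mem_inter.mpr ⟨hrow i b, h ▸ hcol i b⟩
      have heq : π (i, a) = π (i, b) :=
        Finset.card_le_one.mp (hlin _ _ hne) _ h1 _ h2
      exact hab (hrinj i heq)
    have hcolall : ∀ j, S (Sum.inr j) = S (Sum.inr a) := by
      intro j
      by_contra hne
      have hi0 : (⟨0, by omega⟩ : Fin r) ≠ ⟨1, by omega⟩ := by
        simp
      have h1 : π (⟨0, by omega⟩, j) ∈ S (Sum.inr j) ∩ S (Sum.inr a) :=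
        Finset.mem_inter.mpr ⟨hcol _ j, (hrowall _) ▸ hrow _ j⟩
      have h2 : π (⟨1, by omega⟩, j) ∈ S (Sum.inr j) ∩ S (Sum.inr a) :=
        Finset.mem_inter.mpr ⟨hcol _ j, (hrowall _) ▸ hrow _ j⟩
      have heq := Finset.card_le_one.mp (hlin _ _ hne) _ h1 _ h2
      exact hi0 (hcinj j heq)
    exact ⟨Sum.inr a, fun e => by cases e with
      | inl i => exact hrowall i
      | inr j => exact hcolall j⟩
  -- a row equal to a column
  have hC : ∀ a c, S (Sum.inl a) = S (Sum.inr c) →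
      (∃ e0, ∀ e, S e = S e0) ∨
      (∃ e1 e2 e3, (S e1 ∩ S e2).card = 1 ∧ (S e1 ∩ S e3).card = 1 ∧
        (S e2 ∩ S e3).card = 1 ∧ S e1 ∩ S e2 ∩ S e3 = ∅) := by
    intro a c hac
    by_cases hRq : ∃ i, i ≠ a ∧ S (Sum.inl i) = S (Sum.inl a)
    · obtain ⟨i, hia, h⟩ := hRq; exact Or.inl (hDrow i a hia h)
    by_cases hCq : ∃ j, j ≠ c ∧ S (Sum.inr j) = S (Sum.inr c)
    · obtain ⟨j, hjc, h⟩ := hCq; exact Or.inl (hDcol j c hjc h)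
    push_neg at hRq hCq
    have hcard : 1 < Fintype.card (Fin r) := by simp; omega
    obtain ⟨i, hia⟩ := Fintype.exists_ne_of_one_lt_card hcard a
    obtain ⟨j, hjc⟩ := Fintype.exists_ne_of_one_lt_card hcard c
    by_cases hij : S (Sum.inl i) = S (Sum.inr j)
    · -- pick a third column j'
      have hj' : ∃ j' : Fin r, j' ≠ c ∧ j' ≠ j := by
        by_contra h
        push_neg at h
        have hsub : (Finset.univ : Finset (Fin r)) ⊆ {c, j} := by
          intro x _
          by_cases hx : x = c
          · simp [hx]
          · simp [h x hx]
        have hcard2 := Finset.card_le_card hsub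
        have : ({c, j} : Finset (Fin r)).card ≤ 2 :=
          (Finset.card_insert_le _ _).trans (by simp)
        simp [Finset.card_univ] at hcard2
        omega
      obtain ⟨j', hj'c, hj'j⟩ := hj'
      by_cases h1 : S (Sum.inr j') = S (Sum.inr c)
      · exact Or.inl (hDcol j' c hj'c h1)
      by_cases h2 : S (Sum.inr j') = S (Sum.inr j)
      · exact Or.inl (hDcol j' j hj'j h2)
      · refine Or.inr (htri (Sum.inl i) (Sum.inl a) (Sum.inr j')
          (π (i, c)) (π (i, j')) (π (a, j')) (hRq i hia)
          (fun h => h2 (h.symm.trans hij)) (fun h => h1 (h.symm.trans hac))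
          (hrow i c) (hac ▸ hcol i c) (hrow i j') (hcol i j')
          (hrow a j') (hcol a j') ?_)
        intro h
        exact hj'c ((hrinj i h).symm)
    · refine Or.inr (htri (Sum.inl i) (Sum.inr j) (Sum.inl a)
        (π (i, j)) (π (i, c)) (π (a, j)) hij (hRq i hia)
        (fun h => hCq j hjc (h.trans hac))
        (hrow i j) (hcol i j) (hrow i c) (hac ▸ hcol i c)
        (hcol a j) (hrow a j) ?_)
      · intro h
        exact hjc (hrinj i h)
  -- main argument
  rw [Function.not_injective_iff] at hninj
  obtain ⟨⟨i, j⟩, ⟨i', j'⟩, hpq, hne⟩ := hninj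
  have hii' : i ≠ i' := by
    rintro rfl
    exact hne (congrArg (Prod.mk i) (hrinj i hpq))
  have hjj' : j ≠ j' := by
    rintro rfl
    exact hne (congrArg (fun i => (i, j)) (hcinj j hpq))
  by_cases h1 : S (Sum.inl i) = S (Sum.inl i')
  · exact Or.inl (hDrow i i' hii' h1)
  by_cases h2 : S (Sum.inl i) = S (Sum.inr j')
  · exact hC i j' h2
  by_cases h3 : S (Sum.inl i') = S (Sum.inr j')
  · exact hC i' j' h3
  · refine Or.inr (htri (Sum.inl i) (Sum.inl i') (Sum.inr j')
      (π (i, j)) (π (i, j')) (π (i', j')) h1 h2 h3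
      (hrow i j) (hpq ▸ hrow i' j') (hrow i j') (hcol i j')
      (hrow i' j') (hcol i' j') ?_)
    intro h
    exact hjj' (hrinj i h)

/-- **Lemma 6.** Let `r ≥ 3` and let `π` be a homomorphism from the grid hypergraph
`H_r` to a linear `r`-graph `G`. Then the homomorphic image of `H_r` under `π` is
either isomorphic to `H_r`, or is a single edge of `G`, or contains a triangle. -/
theorem grid_hom_image_trichotomy
    {W F : Type} [Fintype W] [Fintype F] (r : ℕ) (hr : 3 ≤ r)
    (gedge : F → Fin r → W) (hinj : ∀ f, Function.Injective (gedge f))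
    (hlinear : ∀ f f' : F, f ≠ f' →
      (hedgeSet r gedge f ∩ hedgeSet r gedge f').card ≤ 1)
    (π : Fin r × Fin r → W)
    (hhom : ∀ e : Fin r ⊕ Fin r, ∃ f : F,
      Finset.image π (hedgeSet r (gridEdge r) e) = hedgeSet r gedge f) :
    -- the image is isomorphic to `H_r`:
    (∃ φ : Fin r × Fin r → W, Function.Injective φ ∧
      Finset.image φ Finset.univ = Finset.image π Finset.univ ∧
      (∀ s : Finset W,
        (∃ e, Finset.image π (hedgeSet r (gridEdge r) e) = s) ↔
        (∃ e, Finset.image φ (hedgeSet r (gridEdge r) e) = s))) ∨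
    -- the image is a single edge of `G`:
    (∃ f : F, ∀ e, Finset.image π (hedgeSet r (gridEdge r) e) = hedgeSet r gedge f) ∨
    -- the image contains a triangle:
    (∃ s₁ s₂ s₃ : Finset W,
      (∃ e, Finset.image π (hedgeSet r (gridEdge r) e) = s₁) ∧
      (∃ e, Finset.image π (hedgeSet r (gridEdge r) e) = s₂) ∧
      (∃ e, Finset.image π (hedgeSet r (gridEdge r) e) = s₃) ∧
      (s₁ ∩ s₂).card = 1 ∧ (s₁ ∩ s₃).card = 1 ∧ (s₂ ∩ s₃).card = 1 ∧
      s₁ ∩ s₂ ∩ s₃ = ∅) := by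
  classical
  by_cases hpi : Function.Injective π
  · exact Or.inl ⟨π, hpi, rfl, fun s => Iff.rfl⟩
  · right
    set S : (Fin r ⊕ Fin r) → Finset W :=
      fun e => Finset.image π (hedgeSet r (gridEdge r) e) with hSdef
    have hrow : ∀ i j, π (i, j) ∈ S (Sum.inl i) := fun i j =>
      Finset.mem_image_of_mem π (mem_hedgeSet r (gridEdge r) (Sum.inl i) j)
    have hcol : ∀ i j, π (i, j) ∈ S (Sum.inr j) := fun i j =>
      Finset.mem_image_of_mem π (mem_hedgeSet r (gridEdge r) (Sum.inr j) i)
    have hScard : ∀ e, (S e).card = r := by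
      intro e
      obtain ⟨f, hf⟩ := hhom e
      have hf' : S e = hedgeSet r gedge f := hf
      rw [hf']
      simp [hedgeSet, Finset.card_image_of_injective _ (hinj f)]
    have hrinj : ∀ i, Function.Injective fun j => π (i, j) := by
      intro i
      have himg : Finset.image (fun j => π (i, j)) Finset.univ = S (Sum.inl i) :=
        (image_hedgeSet r (gridEdge r) (Sum.inl i) π).symm
      have hcardeq : (Finset.image (fun j => π (i, j)) Finset.univ).card
          = (Finset.univ : Finset (Fin r)).card := by
        rw [himg, hScard, Finset.card_univ, Fintype.card_fin]
      have := Finset.card_image_iff.mp hcardeq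
      rw [Finset.coe_univ] at this
      exact Set.injOn_univ.mp this
    have hcinj : ∀ j, Function.Injective fun i => π (i, j) := by
      intro j
      have himg : Finset.image (fun i => π (i, j)) Finset.univ = S (Sum.inr j) :=
        (image_hedgeSet r (gridEdge r) (Sum.inr j) π).symm
      have hcardeq : (Finset.image (fun i => π (i, j)) Finset.univ).card
          = (Finset.univ : Finset (Fin r)).card := by
        rw [himg, hScard, Finset.card_univ, Fintype.card_fin]
      have := Finset.card_image_iff.mp hcardeq
      rw [Finset.coe_univ] at this
      exact Set.injOn_univ.mp this
    have hlin' : ∀ e e', S e ≠ S e' → (S e ∩ S e').card ≤ 1 := by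
      intro e e' hne
      obtain ⟨f, hf⟩ := hhom e
      obtain ⟨f', hf'⟩ := hhom e'
      have hf2 : S e = hedgeSet r gedge f := hf
      have hf2' : S e' = hedgeSet r gedge f' := hf'
      have hff' : f ≠ f' := by
        rintro rfl
        exact hne (hf2.trans hf2'.symm)
      rw [hf2, hf2']
      exact hlinear f f' hff'
    rcases grid_aux r hr S hlin' π hrow hcol hrinj hcinj hpi with
      ⟨e0, hall⟩ | ⟨e1, e2, e3, c1, c2, c3, hemp⟩
    · left
      obtain ⟨f, hf⟩ := hhom e0
      have hf2 : S e0 = hedgeSet r gedge f := hf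
      exact ⟨f, fun e => ((hall e).trans hf2 : S e = _)⟩
    · right
      exact ⟨S e1, S e2, S e3, ⟨e1, rfl⟩, ⟨e2, rfl⟩, ⟨e3, rfl⟩, c1, c2, c3, hemp⟩
end

section
/- If a graph G has a stable involution, then G is positive. -/
open MeasureTheory
open scoped Classical

namespace SIAux

noncomputable def term {V : Type} (f : unitInterval → unitInterval → ℝ) (hf : ∀ a b, f a b = f b a)
    (Y : V → unitInterval) (e : Sym2 V) : ℝ :=
  Sym2.lift ⟨fun u v => f (Y u) (Y v), fun u v => hf (Y u) (Y v)⟩ e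

@[simp] lemma term_mk {V : Type} (f : unitInterval → unitInterval → ℝ) (hf : ∀ a b, f a b = f b a)
    (Y : V → unitInterval) (a b : V) : term f hf Y s(a,b) = f (Y a) (Y b) := rfl

lemma term_measurable {V : Type} [Fintype V] (f : unitInterval → unitInterval → ℝ)
    (hf : ∀ a b, f a b = f b a) (hmeas : Measurable fun p : unitInterval × unitInterval => f p.1 p.2)
    (e : Sym2 V) : Measurable (fun Y : V → unitInterval => term f hf Y e) := by
  induction e using Sym2.ind with
  | _ a b =>
    have h1 : Measurable fun Y : V → unitInterval => (Y a, Y b) :=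
      Measurable.prodMk (measurable_pi_apply a) (measurable_pi_apply b)
    exact hmeas.comp h1

lemma term_abs_le {V : Type} (f : unitInterval → unitInterval → ℝ) (hf : ∀ a b, f a b = f b a)
    {C : ℝ} (hC : ∀ a b, |f a b| ≤ C) (Y : V → unitInterval) (e : Sym2 V) :
    |term f hf Y e| ≤ C := by
  induction e using Sym2.ind with
  | _ a b => simpa using hC (Y a) (Y b)

lemma prod_abs_le {V : Type} (f : unitInterval → unitInterval → ℝ) (hf : ∀ a b, f a b = f b a)
    {C : ℝ} (hC : ∀ a b, |f a b| ≤ C) (Y : V → unitInterval) (s : Finset (Sym2 V)) :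
    |∏ e ∈ s, term f hf Y e| ≤ C ^ s.card := by
  rw [Finset.abs_prod]
  calc ∏ e ∈ s, |term f hf Y e| ≤ ∏ e ∈ s, C :=
        Finset.prod_le_prod (fun e _ => abs_nonneg _) (fun e _ => term_abs_le f hf hC Y e)
    _ = C ^ s.card := by rw [Finset.prod_const]

end SIAux

/-- If a graph `G` has a stable involution, then `G` is positive.
Here `π` is an involutive automorphism of `G`, and `A` plays the role of `V₊`:
the sets `V₀ = {v | π v = v}`, `V₊ = A` and `V₋ = π '' A` partition the vertices,
there is no edge with both ends in `V₀`, and no edge with one end in `V₊` and the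
other in `V₋`. -/
theorem positive_of_stable_involution
    {V : Type} [Fintype V] (G : SimpleGraph V) (π : V → V)
    (hinv : ∀ v, π (π v) = v)
    (hauto : ∀ u v, G.Adj u v → G.Adj (π u) (π v))
    (A : Set V)
    (hdisj : ∀ v ∈ A, π v ∉ A ∧ π v ≠ v)
    (hcover : ∀ v : V, π v ≠ v → v ∈ A ∨ π v ∈ A)
    (hV0 : ∀ u v, π u = u → π v = v → ¬ G.Adj u v)
    (hpm : ∀ u v, u ∈ A → π v ∈ A → ¬ G.Adj u v) :
    GraphPositive G := by
  intro f hf hmeas hbdd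
  obtain ⟨C, hC⟩ := hbdd
  classical
  -- the integrand
  set g : (V → unitInterval) → ℝ := fun Y => ∏ e ∈ G.edgeFinset, SIAux.term f hf Y e with hg
  have hgdef : graphDensity G f hf = ∫ Y : V → unitInterval, g Y := rfl
  have hgm : Measurable g :=
    Finset.measurable_prod _ (fun e _ => SIAux.term_measurable f hf hmeas e)
  have hgb : ∀ Y, |g Y| ≤ C ^ G.edgeFinset.card := fun Y => SIAux.prod_abs_le f hf hC Y _
  -- one-sided structural lemma on edges
  have hside : ∀ a b : V, G.Adj a b → (a ∈ A ∨ b ∈ A) → a ∈ A ∨ π a = a := by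
    intro a b hab h
    by_contra hcon
    push_neg at hcon
    obtain ⟨ha, hpa⟩ := hcon
    have hb : b ∈ A := h.resolve_left ha
    have hpaA : π a ∈ A := (hcover a hpa).resolve_left ha
    exact hpm b a hb hpaA (G.adj_symm hab)
  -- split off the fixed coordinates
  set p : V → Prop := fun v => π v ≠ v with hp
  set ψ := MeasurableEquiv.piEquivPiSubtypeProd (fun _ : V => unitInterval) p with hψdef
  have hψ : MeasurePreserving ψ volume volume :=
    volume_preserving_piEquivPiSubtypeProd (fun _ : V => unitInterval) p
  have hint : Integrable (fun q : ({v // p v} → unitInterval) × ({v // ¬ p v} → unitInterval) =>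
      g (ψ.symm q)) ((volume : Measure ({v // p v} → unitInterval)).prod volume) := by
    refine ⟨((hgm.comp ψ.symm.measurable)).aestronglyMeasurable, ?_⟩
    exact HasFiniteIntegral.of_bounded (C := C ^ G.edgeFinset.card)
      (Filter.Eventually.of_forall fun q => by
        simpa [Real.norm_eq_abs] using hgb (ψ.symm q))
  have hA1 : graphDensity G f hf = ∫ q : ({v // p v} → unitInterval) × ({v // ¬ p v} → unitInterval),
      g (ψ.symm q) ∂((volume : Measure ({v // p v} → unitInterval)).prod volume) := by
    rw [hgdef, ← MeasureTheory.Measure.volume_eq_prod]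
    exact ((MeasurePreserving.symm ψ hψ).integral_comp ψ.symm.measurableEmbedding g).symm
  have hA2 : graphDensity G f hf =
      ∫ xS : {v // ¬ p v} → unitInterval, ∫ y : {v // p v} → unitInterval, g (ψ.symm (y, xS)) := by
    rw [hA1, MeasureTheory.integral_prod _ hint]
    exact MeasureTheory.integral_integral_swap
      (f := fun y xS => g (ψ.symm (y, xS))) hint
  rw [hA2]
  apply integral_nonneg
  intro xS
  show (0:ℝ) ≤ ∫ y : {v // p v} → unitInterval, g (ψ.symm (y, xS))
  -- now work for a fixed assignment on the fixed vertices
  set q₂ : {v // p v} → Prop := fun m => (m : V) ∈ A with hq₂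
  set ψ₂ := MeasurableEquiv.piEquivPiSubtypeProd (fun _ : {v // p v} => unitInterval) q₂ with hψ₂def
  have hψ₂ : MeasurePreserving ψ₂ volume volume :=
    volume_preserving_piEquivPiSubtypeProd (fun _ : {v // p v} => unitInterval) q₂
  set bld : ({m // q₂ m} → unitInterval) → ({m // ¬ q₂ m} → unitInterval) → (V → unitInterval) :=
    fun u w => ψ.symm (ψ₂.symm (u, w), xS) with hbld
  -- values of bld
  have hbval : ∀ u w v, bld u w v =
      if h : p v then (if h2 : q₂ ⟨v, h⟩ then u ⟨⟨v, h⟩, h2⟩ else w ⟨⟨v, h⟩, h2⟩)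
      else xS ⟨v, h⟩ := by
    intro u w v
    show (MeasurableEquiv.piEquivPiSubtypeProd (fun _ : V => unitInterval) p).symm
        ((MeasurableEquiv.piEquivPiSubtypeProd (fun _ : {v // p v} => unitInterval) q₂).symm (u, w), xS) v = _
    simp only [MeasurableEquiv.piEquivPiSubtypeProd_symm_apply]
  have hbA : ∀ u w v (h1 : π v ≠ v) (h2 : v ∈ A), bld u w v = u ⟨⟨v, h1⟩, h2⟩ := by
    intro u w v h1 h2
    rw [hbval, dif_pos h1, dif_pos h2]
  have hbN : ∀ u w v (h1 : π v ≠ v) (h2 : v ∉ A), bld u w v = w ⟨⟨v, h1⟩, h2⟩ := by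
    intro u w v h1 h2
    rw [hbval, dif_pos h1, dif_neg h2]
  have hbS : ∀ u w v (h1 : ¬ π v ≠ v), bld u w v = xS ⟨v, h1⟩ := by
    intro u w v h1
    rw [hbval, dif_neg h1]
  -- edge splitting
  set Ep := G.edgeFinset.filter (fun e => ∃ v ∈ e, v ∈ A) with hEpdef
  set En := G.edgeFinset.filter (fun e => ¬ ∃ v ∈ e, v ∈ A) with hEndef
  have hadj_of_mem : ∀ a b : V, s(a,b) ∈ G.edgeFinset → G.Adj a b := by
    intro a b h
    rwa [SimpleGraph.mem_edgeFinset, SimpleGraph.mem_edgeSet] at h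
  have hmem_of_adj : ∀ a b : V, G.Adj a b → s(a,b) ∈ G.edgeFinset := by
    intro a b h
    rwa [SimpleGraph.mem_edgeFinset, SimpleGraph.mem_edgeSet]
  have hnotA' : ∀ c : V, (c ∈ A ∨ π c = c) → π c ∉ A := by
    intro c hc
    rcases hc with h | h
    · exact (hdisj c h).1
    · rw [h]
      intro hcA
      exact (hdisj c hcA).2 h
  -- independence of the two partial products
  have hPind : ∀ u w w', ∀ e ∈ Ep,
      SIAux.term f hf (bld u w) e = SIAux.term f hf (bld u w') e := by
    intro u w w' e
    induction e using Sym2.ind with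
    | _ a b =>
      intro he
      rw [hEpdef, Finset.mem_filter] at he
      obtain ⟨hemem, hex⟩ := he
      have hadj : G.Adj a b := hadj_of_mem a b hemem
      have hAab : a ∈ A ∨ b ∈ A := by
        obtain ⟨v, hv, hvA⟩ := hex
        rw [Sym2.mem_iff] at hv
        rcases hv with rfl | rfl
        · exact Or.inl hvA
        · exact Or.inr hvA
      have key : ∀ c : V, (c ∈ A ∨ π c = c) → bld u w c = bld u w' c := by
        intro c hc
        rcases hc with hcA | hcF
        · have h1 : π c ≠ c := (hdisj c hcA).2
          rw [hbA u w c h1 hcA, hbA u w' c h1 hcA]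
        · have h1 : ¬ π c ≠ c := fun h => h hcF
          rw [hbS u w c h1, hbS u w' c h1]
      rw [SIAux.term_mk, SIAux.term_mk, key a (hside a b hadj hAab),
        key b (hside b a (G.adj_symm hadj) hAab.symm)]
  have hQind : ∀ u u' w, ∀ e ∈ En,
      SIAux.term f hf (bld u w) e = SIAux.term f hf (bld u' w) e := by
    intro u u' w e
    induction e using Sym2.ind with
    | _ a b =>
      intro he
      rw [hEndef, Finset.mem_filter] at he
      obtain ⟨hemem, hnex⟩ := he
      push_neg at hnex
      have key : ∀ c : V, c ∉ A → bld u w c = bld u' w c := by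
        intro c hc
        by_cases h1 : π c ≠ c
        · rw [hbN u w c h1 hc, hbN u' w c h1 hc]
        · rw [hbS u w c h1, hbS u' w c h1]
      rw [SIAux.term_mk, SIAux.term_mk, key a (hnex a (Sym2.mem_mk_left a b)),
        key b (hnex b (Sym2.mem_mk_right a b))]
  -- the two factors
  set u₀ : ({m // q₂ m} → unitInterval) := fun _ => 0 with hu₀
  set w₀ : ({m // ¬ q₂ m} → unitInterval) := fun _ => 0 with hw₀
  set P : ({m // q₂ m} → unitInterval) → ℝ := fun u => ∏ e ∈ Ep, SIAux.term f hf (bld u w₀) e with hP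
  set Q : ({m // ¬ q₂ m} → unitInterval) → ℝ := fun w => ∏ e ∈ En, SIAux.term f hf (bld u₀ w) e with hQ
  have hfact : ∀ u w, g (bld u w) = P u * Q w := by
    intro u w
    show (∏ e ∈ G.edgeFinset, SIAux.term f hf (bld u w) e) = P u * Q w
    rw [← Finset.prod_filter_mul_prod_filter_not G.edgeFinset (fun e => ∃ v ∈ e, v ∈ A)]
    congr 1
    · exact Finset.prod_congr rfl (fun e he => hPind u w w₀ e he)
    · exact Finset.prod_congr rfl (fun e he => hQind u u₀ w e he)
  -- Fubini on the inner integral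
  have hB1 : (∫ y : {v // p v} → unitInterval, g (ψ.symm (y, xS))) =
      ∫ r : ({m // q₂ m} → unitInterval) × ({m // ¬ q₂ m} → unitInterval),
        g (bld r.1 r.2) ∂((volume : Measure ({m // q₂ m} → unitInterval)).prod volume) := by
    rw [← MeasureTheory.Measure.volume_eq_prod]
    exact ((MeasurePreserving.symm ψ₂ hψ₂).integral_comp ψ₂.symm.measurableEmbedding
      (fun y => g (ψ.symm (y, xS)))).symm
  have hB2 : (∫ r : ({m // q₂ m} → unitInterval) × ({m // ¬ q₂ m} → unitInterval),
      g (bld r.1 r.2) ∂((volume : Measure ({m // q₂ m} → unitInterval)).prod volume)) =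
      (∫ u, P u) * (∫ w, Q w) := by
    rw [show (fun r : ({m // q₂ m} → unitInterval) × ({m // ¬ q₂ m} → unitInterval) =>
        g (bld r.1 r.2)) = fun r => P r.1 * Q r.2 from funext fun r => hfact r.1 r.2]
    exact MeasureTheory.integral_prod_mul P Q
  -- the reflection equivalence
  have hmap1 : ∀ v : V, π v ≠ v → π (π v) ≠ π v := by
    intro v h
    rw [hinv]
    exact Ne.symm h
  let eA : {m : {v // p v} // q₂ m} ≃ {m : {v // p v} // ¬ q₂ m} :=
    ⟨fun a => ⟨⟨π a.1.1, hmap1 a.1.1 a.1.2⟩, (hdisj a.1.1 a.2).1⟩,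
     fun b => ⟨⟨π b.1.1, hmap1 b.1.1 b.1.2⟩, (hcover b.1.1 b.1.2).resolve_left b.2⟩,
     fun a => Subtype.ext (Subtype.ext (hinv a.1.1)),
     fun b => Subtype.ext (Subtype.ext (hinv b.1.1))⟩
  let T : ({m : {v // p v} // q₂ m} → unitInterval) ≃ᵐ ({m : {v // p v} // ¬ q₂ m} → unitInterval) :=
    MeasurableEquiv.piCongrLeft (fun _ => unitInterval) eA
  have hT : MeasurePreserving T volume volume :=
    volume_measurePreserving_piCongrLeft (fun _ => unitInterval) eA
  have hTval : ∀ (u : {m : {v // p v} // q₂ m} → unitInterval) (a : {m : {v // p v} // q₂ m}),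
      T u (eA a) = u a := by
    intro u a
    exact MeasurableEquiv.piCongrLeft_apply_apply (β := fun _ : {m : {v // p v} // ¬ q₂ m} => unitInterval) eA u a
  have hmapinv : ∀ e : Sym2 V, Sym2.map π (Sym2.map π e) = e := by
    intro e
    rw [Sym2.map_map]
    have : π ∘ π = id := funext hinv
    rw [this, Sym2.map_id]
    rfl
  -- the reindexing identity Q (T u) = P u
  have hQT : ∀ u, Q (T u) = P u := by
    intro u
    show (∏ e ∈ En, SIAux.term f hf (bld u₀ (T u)) e) =
      ∏ e ∈ Ep, SIAux.term f hf (bld u w₀) e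
    refine Finset.prod_nbij' (fun e => Sym2.map π e) (fun e => Sym2.map π e) ?_ ?_
      (fun e _ => hmapinv e) (fun e _ => hmapinv e) ?_
    · -- maps En to Ep
      intro e
      induction e using Sym2.ind with
      | _ a b =>
        intro he
        rw [hEndef, Finset.mem_filter] at he
        obtain ⟨hemem, hnex⟩ := he
        push_neg at hnex
        have hadj : G.Adj a b := hadj_of_mem a b hemem
        rw [hEpdef]
        simp only [Sym2.map_pair_eq]
        rw [Finset.mem_filter]
        refine ⟨hmem_of_adj _ _ (hauto a b hadj), ?_⟩
        by_cases hfa : π a = a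
        · have hfb : π b ≠ b := by
            intro hfb
            exact hV0 a b hfa hfb hadj
          have : π b ∈ A := (hcover b hfb).resolve_left (hnex b (Sym2.mem_mk_right a b))
          exact ⟨π b, Sym2.mem_mk_right _ _, this⟩
        · have : π a ∈ A := (hcover a hfa).resolve_left (hnex a (Sym2.mem_mk_left a b))
          exact ⟨π a, Sym2.mem_mk_left _ _, this⟩
    · -- maps Ep to En
      intro e
      induction e using Sym2.ind with
      | _ a b =>
        intro he
        rw [hEpdef, Finset.mem_filter] at he
        obtain ⟨hemem, hex⟩ := he
        have hadj : G.Adj a b := hadj_of_mem a b hemem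
        have hAab : a ∈ A ∨ b ∈ A := by
          obtain ⟨v, hv, hvA⟩ := hex
          rw [Sym2.mem_iff] at hv
          rcases hv with rfl | rfl
          · exact Or.inl hvA
          · exact Or.inr hvA
        rw [hEndef]
        simp only [Sym2.map_pair_eq]
        rw [Finset.mem_filter]
        refine ⟨hmem_of_adj _ _ (hauto a b hadj), ?_⟩
        rintro ⟨v, hv, hvA⟩
        rw [Sym2.mem_iff] at hv
        rcases hv with rfl | rfl
        · exact hnotA' a (hside a b hadj hAab) hvA
        · exact hnotA' b (hside b a (G.adj_symm hadj) hAab.symm) hvA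
    · -- terms match
      intro e
      induction e using Sym2.ind with
      | _ a b =>
        intro he
        rw [hEndef, Finset.mem_filter] at he
        obtain ⟨hemem, hnex⟩ := he
        push_neg at hnex
        have key : ∀ c : V, c ∉ A → bld u₀ (T u) c = bld u w₀ (π c) := by
          intro c hc
          by_cases h1 : π c ≠ c
          · have h1' : π (π c) ≠ π c := hmap1 c h1
            have h2' : π c ∈ A := (hcover c h1).resolve_left hc
            rw [hbN u₀ (T u) c h1 hc, hbA u w₀ (π c) h1' h2']
            have heq : eA ⟨⟨π c, h1'⟩, h2'⟩ = ⟨⟨c, h1⟩, hc⟩ :=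
              Subtype.ext (Subtype.ext (hinv c))
            rw [← heq, hTval u ⟨⟨π c, h1'⟩, h2'⟩]
          · push_neg at h1
            have h1' : ¬ π c ≠ c := fun h => h h1
            rw [hbS u₀ (T u) c h1', h1, hbS u w₀ c h1']
        simp only [Sym2.map_pair_eq, SIAux.term_mk]
        rw [key a (hnex a (Sym2.mem_mk_left a b)), key b (hnex b (Sym2.mem_mk_right a b))]
  -- put the inner integral together
  have hQint : (∫ w, Q w) = ∫ u, P u := by
    have hcomp : (∫ u, Q (T u)) = ∫ w, Q w :=
      hT.integral_comp T.measurableEmbedding Q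
    rw [← hcomp]
    exact integral_congr_ae (Filter.Eventually.of_forall fun u => hQT u)
  rw [hB1, hB2, hQint]
  exact mul_self_nonneg _
end

section
/- Let G be a connected bipartite graph with bipartition (A,B), let f:[0,1]²→ℝ be bounded measurable, and define g:[0,1]²→ℝ by g(x,y) = f(2x,2y−1) if 0 ≤ x < 1/2 ≤ y ≤ 1, g(x,y) = f(2y,2x−1) if 0 ≤ y < 1/2 ≤ x ≤ 1, and g(x,y) = 0 otherwise. Then g is symmetric and t_G(g) = 2^{−v(G)} (t_G(f) + t_G(f^T)), where f^T(x,y) := f(y,x) and v(G) is the number of vertices of G. -/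
open MeasureTheory
open scoped Classical
open scoped ENNReal unitInterval

noncomputable section

/-- The homomorphism density of a (not necessarily symmetric) kernel `f` in the
bipartite graph on `A ⊕ B` with edge set `Es ⊆ A × B`: each edge `(a, b)`
contributes the factor `f (z (inl a)) (z (inr b))`. -/
def bipDensity {A B : Type} [Fintype A] [Fintype B] (Es : Finset (A × B))
    (f : unitInterval → unitInterval → ℝ) : ℝ :=
  ∫ z : (A ⊕ B) → unitInterval,
    ∏ p ∈ Es, f (z (Sum.inl p.1)) (z (Sum.inr p.2))

/-- The bipartite graph on `A ⊕ B` with edge set `Es ⊆ A × B`, as a simple graph. -/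
def bipGraph {A B : Type} (Es : Finset (A × B)) : SimpleGraph (A ⊕ B) :=
  SimpleGraph.fromRel (fun u v => ∃ p ∈ Es, u = Sum.inl p.1 ∧ v = Sum.inr p.2)

/-- The symmetrization `g` of `f`: `g(x,y) = f(2x, 2y−1)` if `0 ≤ x < 1/2 ≤ y ≤ 1`,
`g(x,y) = f(2y, 2x−1)` if `0 ≤ y < 1/2 ≤ x ≤ 1`, and `g(x,y) = 0` otherwise. -/
def symmetrize (f : unitInterval → unitInterval → ℝ) :
    unitInterval → unitInterval → ℝ := fun x y =>
  if x.val < 1/2 ∧ 1/2 ≤ y.val then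
    f (Set.projIcc 0 1 zero_le_one (2 * x.val)) (Set.projIcc 0 1 zero_le_one (2 * y.val - 1))
  else if y.val < 1/2 ∧ 1/2 ≤ x.val then
    f (Set.projIcc 0 1 zero_le_one (2 * y.val)) (Set.projIcc 0 1 zero_le_one (2 * x.val - 1))
  else 0


namespace DensitySymmAux

open Set MeasureTheory Measure

/-- map onto lower half -/
def half0 : unitInterval → unitInterval := fun x =>
  ⟨2⁻¹ * x.val, by
    constructor
    · have := x.2.1; positivity
    · have := x.2.2; linarith⟩

/-- map onto upper half -/
def half1 : unitInterval → unitInterval := fun x =>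
  ⟨2⁻¹ * (1 + x.val), by
    constructor
    · have := x.2.1; linarith
    · have := x.2.2; linarith⟩

lemma measurable_half0 : Measurable half0 :=
  Measurable.subtype_mk (measurable_const.mul measurable_subtype_coe)

lemma measurable_half1 : Measurable half1 :=
  Measurable.subtype_mk (measurable_const.mul (measurable_const.add measurable_subtype_coe))

/-- split map -/
def psi : Bool × unitInterval → unitInterval := fun p =>
  if p.1 = true then half1 p.2 else half0 p.2

@[simp] lemma psi_false (x : unitInterval) : psi (false, x) = half0 x := rfl
@[simp] lemma psi_true (x : unitInterval) : psi (true, x) = half1 x := rfl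

lemma measurable_psi : Measurable psi := by
  refine Measurable.ite ?_ (measurable_half1.comp measurable_snd)
    (measurable_half0.comp measurable_snd)
  exact measurable_fst (measurableSet_singleton true)

/-- the half measure on Bool -/
def muB : Measure Bool := (2 : ℝ≥0∞)⁻¹ • (Measure.dirac false + Measure.dirac true)

instance : IsProbabilityMeasure muB := by
  constructor
  simp [muB]
  rw [ENNReal.inv_two_add_inv_two]

lemma muB_singleton (b : Bool) : muB {b} = 2⁻¹ := by
  cases b <;> simp [muB, Measure.dirac_apply]


lemma volume_coe_image (s : Set unitInterval) :
    (volume : Measure unitInterval) s = volume (Subtype.val '' s) := by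
  rw [unitInterval.volume_def, comap_subtype_coe_apply measurableSet_Icc]

lemma image_half0_preimage (s : Set unitInterval) :
    Subtype.val '' (half0 ⁻¹' s) =
      (fun x : ℝ => 2⁻¹ * x) ⁻¹' (Subtype.val '' s ∩ Icc 0 2⁻¹) := by
  ext x
  constructor
  · rintro ⟨y, hy, rfl⟩
    refine ⟨⟨half0 y, hy, rfl⟩, ?_⟩
    have h1 := y.2.1; have h2 := y.2.2
    constructor <;> simp only [] <;> nlinarith
  · rintro ⟨⟨z, hz, hzv⟩, hmem⟩
    have hx : x ∈ Set.Icc (0:ℝ) 1 := by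
      obtain ⟨h1, h2⟩ := hmem
      constructor <;> nlinarith
    refine ⟨⟨x, hx⟩, ?_, rfl⟩
    have : half0 ⟨x, hx⟩ = z := Subtype.ext hzv.symm
    rw [Set.mem_preimage, this]; exact hz

lemma image_half1_preimage (s : Set unitInterval) :
    Subtype.val '' (half1 ⁻¹' s) =
      (fun x : ℝ => 1 + x) ⁻¹' ((fun x : ℝ => 2⁻¹ * x) ⁻¹' (Subtype.val '' s ∩ Icc 2⁻¹ 1)) := by
  ext x
  constructor
  · rintro ⟨y, hy, rfl⟩
    refine ⟨⟨half1 y, hy, rfl⟩, ?_⟩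
    have h1 := y.2.1; have h2 := y.2.2
    constructor <;> simp only [] <;> nlinarith
  · rintro ⟨⟨z, hz, hzv⟩, hmem⟩
    have hx : x ∈ Set.Icc (0:ℝ) 1 := by
      obtain ⟨h1, h2⟩ := hmem
      constructor <;> nlinarith
    refine ⟨⟨x, hx⟩, ?_, rfl⟩
    have : half1 ⟨x, hx⟩ = z := Subtype.ext hzv.symm
    rw [Set.mem_preimage, this]; exact hz

lemma split_volume (S : Set ℝ) (hS : MeasurableSet S) (hS1 : S ⊆ Icc 0 1) :
    volume (S ∩ Icc 0 2⁻¹) + volume (S ∩ Icc 2⁻¹ 1) = volume S := by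
  have h1 : volume (S ∩ Icc (2⁻¹:ℝ) 1) = volume (S \ Icc 0 2⁻¹) := by
    apply le_antisymm
    · have hsub : S ∩ Icc (2⁻¹:ℝ) 1 ⊆ (S \ Icc 0 2⁻¹) ∪ {(2⁻¹:ℝ)} := by
        rintro x ⟨hxS, hx1, hx2⟩
        rcases eq_or_lt_of_le hx1 with h | h
        · right; simp [h.symm]
        · left; exact ⟨hxS, fun hc => absurd hc.2 (not_le.mpr h)⟩
      calc volume (S ∩ Icc (2⁻¹:ℝ) 1) ≤ volume ((S \ Icc 0 2⁻¹) ∪ {(2⁻¹:ℝ)}) :=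
            measure_mono hsub
        _ ≤ volume (S \ Icc 0 2⁻¹) + volume {(2⁻¹:ℝ)} := measure_union_le _ _
        _ = volume (S \ Icc 0 2⁻¹) := by rw [Real.volume_singleton, add_zero]
    · apply measure_mono
      rintro x ⟨hxS, hx⟩
      have hx01 := hS1 hxS
      refine ⟨hxS, ?_, hx01.2⟩
      by_contra hlt
      exact hx ⟨hx01.1, le_of_lt (not_le.mp hlt)⟩
  rw [h1, measure_inter_add_diff S measurableSet_Icc]

lemma half_volume (s : Set unitInterval) (hs : MeasurableSet s) :
    (volume : Measure unitInterval) (half0 ⁻¹' s) +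
      (volume : Measure unitInterval) (half1 ⁻¹' s) = 2 * volume s := by
  have hSm : MeasurableSet (Subtype.val '' s) :=
    (MeasurableEmbedding.subtype_coe measurableSet_Icc).measurableSet_image' hs
  have hS1 : Subtype.val '' s ⊆ Icc 0 1 := by rintro _ ⟨x, hx, rfl⟩; exact x.2
  rw [volume_coe_image (half0 ⁻¹' s), volume_coe_image (half1 ⁻¹' s), volume_coe_image s,
    image_half0_preimage, image_half1_preimage]
  rw [Real.volume_preimage_mul_left (by norm_num : (2⁻¹:ℝ) ≠ 0)]
  rw [show (fun x : ℝ => 1 + x) = ((1:ℝ) + ·) from rfl, measure_preimage_add,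
    Real.volume_preimage_mul_left (by norm_num : (2⁻¹:ℝ) ≠ 0)]
  rw [← mul_add, split_volume _ hSm hS1]
  norm_num

lemma measurePreserving_psi :
    MeasurePreserving psi (muB.prod volume) volume := by
  refine ⟨measurable_psi, ?_⟩
  ext s hs
  rw [Measure.map_apply measurable_psi hs, Measure.prod_apply (measurable_psi hs)]
  have : ∀ b : Bool, (Prod.mk b ⁻¹' (psi ⁻¹' s)) = (fun x => psi (b, x)) ⁻¹' s := fun b => rfl
  rw [show muB = (2 : ℝ≥0∞)⁻¹ • (Measure.dirac false + Measure.dirac true) from rfl]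
  rw [lintegral_smul_measure, lintegral_add_measure, lintegral_dirac, lintegral_dirac]
  simp only [this]
  have h0 : (fun x => psi (false, x)) = half0 := rfl
  have h1 : (fun x => psi (true, x)) = half1 := rfl
  rw [h0, h1, half_volume s hs, smul_eq_mul, ← mul_assoc, ENNReal.inv_mul_cancel (by norm_num) (by norm_num),
    one_mul]


variable (f : unitInterval → unitInterval → ℝ)

lemma g_half01 (x y : unitInterval) (hx : (x:ℝ) ≠ 1) :
    symmetrize f (half0 x) (half1 y) = f x y := by
  have hx1 : (x:ℝ) < 1 := lt_of_le_of_ne x.2.2 hx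
  have hy0 := y.2.1
  rw [symmetrize, if_pos]
  · have e1 : 2 * (half0 x).val = (x:ℝ) := by show 2 * (2⁻¹ * (x:ℝ)) = (x:ℝ); ring
    have e2 : 2 * (half1 y).val - 1 = (y:ℝ) := by show 2 * (2⁻¹ * (1 + (y:ℝ))) - 1 = (y:ℝ); ring
    rw [e1, e2, Set.projIcc_val, Set.projIcc_val]
  · constructor
    · show 2⁻¹ * (x:ℝ) < 1/2; linarith
    · show 1/2 ≤ 2⁻¹ * (1 + (y:ℝ)); linarith

lemma g_half10 (x y : unitInterval) (hy : (y:ℝ) ≠ 1) :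
    symmetrize f (half1 x) (half0 y) = f y x := by
  have hy1 : (y:ℝ) < 1 := lt_of_le_of_ne y.2.2 hy
  have hx0 := x.2.1
  rw [symmetrize, if_neg, if_pos]
  · have e1 : 2 * (half0 y).val = (y:ℝ) := by show 2 * (2⁻¹ * (y:ℝ)) = (y:ℝ); ring
    have e2 : 2 * (half1 x).val - 1 = (x:ℝ) := by show 2 * (2⁻¹ * (1 + (x:ℝ))) - 1 = (x:ℝ); ring
    rw [e1, e2, Set.projIcc_val, Set.projIcc_val]
  · constructor
    · show 2⁻¹ * (y:ℝ) < 1/2; linarith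
    · show 1/2 ≤ 2⁻¹ * (1 + (x:ℝ)); linarith
  · rintro ⟨h1, -⟩
    have : 2⁻¹ * (1 + (x:ℝ)) < 1/2 := h1
    linarith

lemma g_half00 (x y : unitInterval) (hx : (x:ℝ) ≠ 1) (hy : (y:ℝ) ≠ 1) :
    symmetrize f (half0 x) (half0 y) = 0 := by
  have hx1 : (x:ℝ) < 1 := lt_of_le_of_ne x.2.2 hx
  have hy1 : (y:ℝ) < 1 := lt_of_le_of_ne y.2.2 hy
  rw [symmetrize, if_neg, if_neg]
  · rintro ⟨-, h2⟩
    have : (1:ℝ)/2 ≤ 2⁻¹ * (x:ℝ) := h2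
    linarith
  · rintro ⟨-, h2⟩
    have : (1:ℝ)/2 ≤ 2⁻¹ * (y:ℝ) := h2
    linarith

lemma g_half11 (x y : unitInterval) :
    symmetrize f (half1 x) (half1 y) = 0 := by
  have hx0 := x.2.1
  have hy0 := y.2.1
  rw [symmetrize, if_neg, if_neg]
  · rintro ⟨h1, -⟩
    have : 2⁻¹ * (1 + (y:ℝ)) < 1/2 := h1
    linarith
  · rintro ⟨h1, -⟩
    have : 2⁻¹ * (1 + (x:ℝ)) < 1/2 := h1
    linarith

lemma measurable_symmetrize
    (hmeas : Measurable (fun p : unitInterval × unitInterval => f p.1 p.2)) :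
    Measurable (fun p : unitInterval × unitInterval => symmetrize f p.1 p.2) := by
  have hval1 : Measurable fun p : unitInterval × unitInterval => (p.1 : ℝ) :=
    measurable_subtype_coe.comp measurable_fst
  have hval2 : Measurable fun p : unitInterval × unitInterval => (p.2 : ℝ) :=
    measurable_subtype_coe.comp measurable_snd
  have hproj : Measurable (Set.projIcc (0:ℝ) 1 zero_le_one) := continuous_projIcc.measurable
  unfold symmetrize
  refine Measurable.ite ?_ ?_ (Measurable.ite ?_ ?_ measurable_const)
  · exact (measurableSet_lt hval1 measurable_const).inter
      (measurableSet_le measurable_const hval2)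
  · exact hmeas.comp ((hproj.comp ((measurable_const.mul hval1))).prodMk
      (hproj.comp ((measurable_const.mul hval2).sub measurable_const)))
  · exact (measurableSet_lt hval2 measurable_const).inter
      (measurableSet_le measurable_const hval1)
  · exact hmeas.comp ((hproj.comp ((measurable_const.mul hval2))).prodMk
      (hproj.comp ((measurable_const.mul hval1).sub measurable_const)))


lemma eps_trichotomy {A B : Type} [Fintype A] [Fintype B] (Es : Finset (A × B))
    (hconn : (bipGraph Es).Connected) (ε : A ⊕ B → Bool) :
    (∀ v, ε v = Sum.isRight v) ∨ (∀ v, ε v = Sum.isLeft v) ∨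
      ∃ p ∈ Es, ε (Sum.inl p.1) = ε (Sum.inr p.2) := by
  by_cases h : ∃ p ∈ Es, ε (Sum.inl p.1) = ε (Sum.inr p.2)
  · exact Or.inr (Or.inr h)
  push_neg at h
  have hc : ∀ u v, (bipGraph Es).Adj u v → xor (ε u) u.isRight = xor (ε v) v.isRight := by
    intro u v huv
    rw [bipGraph, SimpleGraph.fromRel_adj] at huv
    obtain ⟨-, h' | h'⟩ := huv
    · obtain ⟨p, hp, rfl, rfl⟩ := h'
      have hne := h p hp
      cases hεa : ε (Sum.inl p.1) <;> cases hεb : ε (Sum.inr p.2) <;> simp_all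
    · obtain ⟨p, hp, rfl, rfl⟩ := h'
      have hne := h p hp
      cases hεa : ε (Sum.inl p.1) <;> cases hεb : ε (Sum.inr p.2) <;> simp_all
  have hall : ∀ u v : A ⊕ B, xor (ε u) u.isRight = xor (ε v) v.isRight := by
    intro u v
    obtain ⟨w⟩ := hconn u v
    induction w with
    | nil => rfl
    | cons ha _ ih => exact (hc _ _ ha).trans ih
  obtain ⟨v0⟩ := hconn.nonempty
  cases hcv : xor (ε v0) (Sum.isRight v0)
  · left; intro v
    have hx := (hall v v0).trans hcv
    cases hv : ε v <;> cases hir : Sum.isRight v <;> simp_all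
  · right; left; intro v
    have hx := (hall v v0).trans hcv
    cases v <;> simp_all

end DensitySymmAux

set_option maxHeartbeats 1600000 in
/-- Let `G` be a connected bipartite graph with bipartition `(A,B)` and let `f` be
bounded measurable. Then the symmetrization `g` of `f` is symmetric and
`t_G(g) = 2^{-v(G)} (t_G(f) + t_G(fᵀ))`. -/
theorem density_symmetrize
    {A B : Type} [Fintype A] [Fintype B] (Es : Finset (A × B))
    (hconn : (bipGraph Es).Connected)
    (f : unitInterval → unitInterval → ℝ)
    (hmeas : Measurable (fun p : unitInterval × unitInterval => f p.1 p.2))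
    (hbdd : ∃ C, ∀ a b, |f a b| ≤ C) :
    (∀ a b, symmetrize f a b = symmetrize f b a) ∧
    bipDensity Es (symmetrize f) =
      ((1 : ℝ) / 2) ^ (Fintype.card A + Fintype.card B) *
        (bipDensity Es f + bipDensity Es (fun x y => f y x)) := by
  classical
  obtain ⟨C, hC⟩ := hbdd
  set D := max C 0 with hD
  have hDf : ∀ a b, |f a b| ≤ D := fun a b => (hC a b).trans (le_max_left _ _)
  have hDft : ∀ a b, |(fun x y => f y x) a b| ≤ D := fun a b => hDf b a
  set g := symmetrize f with hg
  have hsymm : ∀ a b, symmetrize f a b = symmetrize f b a := by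
    intro a b
    simp only [symmetrize]
    by_cases h1 : (a:ℝ) < 1/2 ∧ 1/2 ≤ (b:ℝ)
    · have h2 : ¬((b:ℝ) < 1/2 ∧ 1/2 ≤ (a:ℝ)) := by rintro ⟨hb, -⟩; exact absurd h1.2 (not_le.mpr hb)
      rw [if_pos h1, if_neg h2, if_pos h1]
    · by_cases h2 : (b:ℝ) < 1/2 ∧ 1/2 ≤ (a:ℝ)
      · rw [if_neg h1, if_pos h2, if_pos h2]
      · rw [if_neg h1, if_neg h2, if_neg h2, if_neg h1]
  refine ⟨hsymm, ?_⟩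
  have hDg : ∀ a b, |g a b| ≤ D := by
    intro a b
    rw [hg, symmetrize]
    split_ifs
    · exact hDf _ _
    · exact hDf _ _
    · rw [abs_zero, hD]; exact le_sup_right
  have hgmeas : Measurable (fun p : unitInterval × unitInterval => g p.1 p.2) :=
    DensitySymmAux.measurable_symmetrize f hmeas
  have hftmeas : Measurable (fun p : unitInterval × unitInterval => f p.2 p.1) :=
    hmeas.comp measurable_swap
  -- product integrand helpers
  have measP : ∀ h : unitInterval → unitInterval → ℝ,
      Measurable (fun p : unitInterval × unitInterval => h p.1 p.2) →
      Measurable (fun z : (A ⊕ B) → unitInterval =>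
        ∏ p ∈ Es, h (z (Sum.inl p.1)) (z (Sum.inr p.2))) := by
    intro h hh
    apply Finset.measurable_prod
    intro p _
    exact hh.comp (Measurable.prodMk (measurable_pi_apply (Sum.inl p.1))
      (measurable_pi_apply (Sum.inr p.2)))
  have boundP : ∀ h : unitInterval → unitInterval → ℝ, (∀ a b, |h a b| ≤ D) →
      ∀ z : (A ⊕ B) → unitInterval,
        |∏ p ∈ Es, h (z (Sum.inl p.1)) (z (Sum.inr p.2))| ≤ D ^ Es.card := by
    intro h hh z
    rw [Finset.abs_prod]
    calc ∏ p ∈ Es, |h (z (Sum.inl p.1)) (z (Sum.inr p.2))| ≤ ∏ _p ∈ Es, D :=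
          Finset.prod_le_prod (fun _ _ => abs_nonneg _) (fun p _ => hh _ _)
      _ = D ^ Es.card := Finset.prod_const D
  -- the measure-preserving maps
  set Ψ : ((A ⊕ B) → Bool × unitInterval) → ((A ⊕ B) → unitInterval) :=
    fun a v => DensitySymmAux.psi (a v) with hΨ
  set piP : Measure ((A ⊕ B) → Bool × unitInterval) :=
    Measure.pi fun _ => DensitySymmAux.muB.prod volume with hpiP
  set piB : Measure ((A ⊕ B) → Bool) := Measure.pi fun _ => DensitySymmAux.muB with hpiB
  set piI : Measure ((A ⊕ B) → unitInterval) := Measure.pi fun _ => volume with hpiI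
  have MP1 : MeasurePreserving Ψ piP piI :=
    measurePreserving_pi _ _ (fun _ => DensitySymmAux.measurePreserving_psi)
  set e := MeasurableEquiv.arrowProdEquivProdArrow Bool unitInterval (A ⊕ B) with he
  have MP2 : MeasurePreserving e piP (piB.prod piI) :=
    measurePreserving_arrowProdEquivProdArrow Bool unitInterval (A ⊕ B) _ _
  have MP3 : MeasurePreserving e.symm (piB.prod piI) piP := MP2.symm e
  have hvol : (volume : Measure ((A ⊕ B) → unitInterval)) = piI := rfl
  -- a.e. coordinates are not 1
  have hone : (volume : Measure unitInterval) {x : unitInterval | (x:ℝ) = 1} = 0 := by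
    have hset : {x : unitInterval | (x:ℝ) = 1} = {(⟨1, by norm_num⟩ : unitInterval)} := by
      ext x; simp only [Set.mem_setOf_eq, Set.mem_singleton_iff, Subtype.ext_iff]
    rw [hset, DensitySymmAux.volume_coe_image, Set.image_singleton]
    exact Real.volume_singleton
  have hae : ∀ᵐ w : (A ⊕ B) → unitInterval ∂piI, ∀ v, (w v : ℝ) ≠ 1 := by
    rw [ae_all_iff]
    intro v
    refine ae_iff.mpr ?_
    have hset : {w : (A ⊕ B) → unitInterval | ¬(w v : ℝ) ≠ 1} =
        Function.eval v ⁻¹' {x : unitInterval | (x:ℝ) = 1} := by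
      ext w; simp [Function.eval]
    rw [hpiI, hset]
    exact Measure.pi_eval_preimage_null _ hone
  -- the inner integrals
  set J : ((A ⊕ B) → Bool) → ℝ := fun ε =>
    ∫ w : (A ⊕ B) → unitInterval,
      (∏ p ∈ Es, g (DensitySymmAux.psi (ε (Sum.inl p.1), w (Sum.inl p.1)))
        (DensitySymmAux.psi (ε (Sum.inr p.2), w (Sum.inr p.2)))) ∂piI with hJ
  have hJf : ∀ ε : (A ⊕ B) → Bool, (∀ v, ε v = Sum.isRight v) → J ε = bipDensity Es f := by
    intro ε hε
    have : J ε = ∫ w : (A ⊕ B) → unitInterval,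
        (∏ p ∈ Es, f (w (Sum.inl p.1)) (w (Sum.inr p.2))) ∂piI := by
      apply integral_congr_ae
      filter_upwards [hae] with w hw
      apply Finset.prod_congr rfl
      intro p _
      rw [hε (Sum.inl p.1), hε (Sum.inr p.2)]
      simp only [Sum.isRight_inl, Sum.isRight_inr, DensitySymmAux.psi_false,
        DensitySymmAux.psi_true]
      exact DensitySymmAux.g_half01 f _ _ (hw (Sum.inl p.1))
    rw [this]; rfl
  have hJt : ∀ ε : (A ⊕ B) → Bool, (∀ v, ε v = Sum.isLeft v) →
      J ε = bipDensity Es (fun x y => f y x) := by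
    intro ε hε
    have : J ε = ∫ w : (A ⊕ B) → unitInterval,
        (∏ p ∈ Es, f (w (Sum.inr p.2)) (w (Sum.inl p.1))) ∂piI := by
      apply integral_congr_ae
      filter_upwards [hae] with w hw
      apply Finset.prod_congr rfl
      intro p _
      rw [hε (Sum.inl p.1), hε (Sum.inr p.2)]
      simp only [Sum.isLeft_inl, Sum.isLeft_inr, DensitySymmAux.psi_false,
        DensitySymmAux.psi_true]
      exact DensitySymmAux.g_half10 f _ _ (hw (Sum.inr p.2))
    rw [this]; rfl
  have hJ0 : ∀ ε : (A ⊕ B) → Bool,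
      (∃ p ∈ Es, ε (Sum.inl p.1) = ε (Sum.inr p.2)) → J ε = 0 := by
    rintro ε ⟨p0, hp0, hpe⟩
    have : J ε = ∫ _w : (A ⊕ B) → unitInterval, (0:ℝ) ∂piI := by
      apply integral_congr_ae
      filter_upwards [hae] with w hw
      apply Finset.prod_eq_zero hp0
      cases hb : ε (Sum.inr p0.2)
      · rw [hpe, hb]
        simp only [DensitySymmAux.psi_false]
        exact DensitySymmAux.g_half00 f _ _ (hw (Sum.inl p0.1)) (hw (Sum.inr p0.2))
      · rw [hpe, hb]
        simp only [DensitySymmAux.psi_true]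
        exact DensitySymmAux.g_half11 f _ _
    rw [this, integral_zero]
  -- integrability
  set F2 : ((A ⊕ B) → Bool) × ((A ⊕ B) → unitInterval) → ℝ :=
    fun q => ∏ p ∈ Es, g ((Ψ (e.symm q)) (Sum.inl p.1)) ((Ψ (e.symm q)) (Sum.inr p.2)) with hF2
  have hF2meas : Measurable F2 :=
    ((measP g hgmeas).comp MP1.measurable).comp MP3.measurable
  have hF2int : Integrable F2 (piB.prod piI) := by
    refine Integrable.mono' (integrable_const (D ^ Es.card)) hF2meas.aestronglyMeasurable
      (ae_of_all _ fun q => ?_)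
    rw [Real.norm_eq_abs]
    exact boundP g hDg _
  -- main calculation
  have key : bipDensity Es g = ∑ ε : (A ⊕ B) → Bool, (piB {ε}).toReal • J ε :=
    calc bipDensity Es g
        = ∫ z : (A ⊕ B) → unitInterval,
            (∏ p ∈ Es, g (z (Sum.inl p.1)) (z (Sum.inr p.2))) ∂(Measure.map Ψ piP) := by
          rw [bipDensity, show (volume : Measure ((A ⊕ B) → unitInterval)) = piI from rfl,
            ← MP1.map_eq]
      _ = ∫ a, (∏ p ∈ Es, g ((Ψ a) (Sum.inl p.1)) ((Ψ a) (Sum.inr p.2))) ∂piP :=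
          integral_map MP1.measurable.aemeasurable (measP g hgmeas).aestronglyMeasurable
      _ = ∫ q, (∏ p ∈ Es, g ((Ψ (e.symm q)) (Sum.inl p.1)) ((Ψ (e.symm q)) (Sum.inr p.2)))
            ∂(piB.prod piI) :=
          (MP3.integral_comp e.symm.measurableEmbedding _).symm
      _ = ∫ ε, ∫ w, F2 (ε, w) ∂piI ∂piB := integral_prod F2 hF2int
      _ = ∑ ε : (A ⊕ B) → Bool, (piB {ε}).toReal • J ε :=
          integral_fintype hF2int.integral_prod_left
  have hweight : ∀ ε : (A ⊕ B) → Bool,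
      (piB {ε}).toReal = ((1:ℝ)/2) ^ (Fintype.card A + Fintype.card B) := by
    intro ε
    rw [hpiB, ← Set.univ_pi_singleton ε, Measure.pi_pi]
    simp only [DensitySymmAux.muB_singleton, Finset.prod_const, Finset.card_univ]
    rw [ENNReal.toReal_pow, Fintype.card_sum]
    norm_num
  set εf : (A ⊕ B) → Bool := fun v => Sum.isRight v with hεf
  set εt : (A ⊕ B) → Bool := fun v => Sum.isLeft v with hεt
  have hne : εf ≠ εt := by
    intro hcontra
    obtain ⟨v0⟩ := hconn.nonempty
    have hcv := congrFun hcontra v0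
    rw [hεf, hεt] at hcv
    cases v0 <;> simp at hcv
  have hsum : ∑ ε ∈ ({εf, εt} : Finset ((A ⊕ B) → Bool)), (piB {ε}).toReal • J ε =
      ∑ ε : (A ⊕ B) → Bool, (piB {ε}).toReal • J ε := by
    refine Finset.sum_subset (Finset.subset_univ _) ?_
    intro ε _ hε
    simp only [Finset.mem_insert, Finset.mem_singleton] at hε
    push_neg at hε
    rcases DensitySymmAux.eps_trichotomy Es hconn ε with h | h | h
    · exact absurd (funext h) hε.1
    · exact absurd (funext h) hε.2
    · rw [hJ0 ε h, smul_zero]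
  rw [key, ← hsum, Finset.sum_pair hne, hweight, hweight, hJf εf (fun v => rfl),
    hJt εt (fun v => rfl), smul_eq_mul, smul_eq_mul, mul_add]


end
end

section
/- Let r ≥ 3 and let G be a linear r-graph that contains neither a triangle nor the grid hypergraph H_r as a subgraph. Then every homomorphism π from H_r to the box product G□G falls into one of two types: either π maps all of H_r into a single (horizontal or vertical) edge of G□G, or π maps the vertices (i,j) of H_r to vertices (x_i, y_j) of G□G where {x₁,…,x_r} and {y₁,…,y_r} are edges of G, so that the r rows of H_r map to r horizontal edges and the r columns map to r vertical edges of G□G (or vice versa after swapping the roles of rows and columns). -/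
open MeasureTheory
open scoped Classical

/-- The edges of the box product `G □ G` of an `r`-graph `G` with itself:
`Sum.inl (f, y)` is the horizontal edge `{(x₁,y),…,(x_r,y)}` where
`{x₁,…,x_r}` is the edge `f` of `G`, and `Sum.inr (x, f)` is the vertical edge
`{(x,y₁),…,(x,y_r)}` where `{y₁,…,y_r}` is the edge `f` of `G`. -/
def boxEdge {W F : Type} (r : ℕ) (gedge : F → Fin r → W) :
    (F × W ⊕ W × F) → Fin r → W × W
  | Sum.inl (f, y) => fun i => (gedge f i, y)
  | Sum.inr (x, f) => fun i => (x, gedge f i)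

set_option linter.unusedSectionVars false

section Helpers
variable {W F : Type} [Fintype W] [Fintype F]

lemma hedge_card (r : ℕ) (gedge : F → Fin r → W) (hinj : ∀ f, Function.Injective (gedge f))
    (p : F) : (hedgeSet r gedge p).card = r := by
  unfold hedgeSet
  rw [Finset.card_image_of_injective _ (hinj p), Finset.card_univ, Fintype.card_fin]

lemma image_surj_comp {γ : Type} [DecidableEq γ] {r : ℕ} (g : Fin r → γ) {t : Fin r → Fin r}
    (ht : Function.Surjective t) :
    Finset.image (fun j => g (t j)) Finset.univ = Finset.image g Finset.univ := by
  ext w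
  simp only [Finset.mem_image, Finset.mem_univ, true_and]
  constructor
  · rintro ⟨j, rfl⟩; exact ⟨t j, rfl⟩
  · rintro ⟨k, rfl⟩; obtain ⟨j, rfl⟩ := ht k; exact ⟨j, rfl⟩

lemma line_struct (r : ℕ) (gedge : F → Fin r → W)
    (hinj : ∀ f, Function.Injective (gedge f)) (q : Fin r → W × W)
    (e' : F × W ⊕ W × F)
    (h : Finset.image q Finset.univ = hedgeSet r (boxEdge r gedge) e') :
    (∃ f c t, Function.Bijective t ∧ ∀ j, q j = (gedge f (t j), c)) ∨
    (∃ c f t, Function.Bijective t ∧ ∀ j, q j = (c, gedge f (t j))) := by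
  have hmem : ∀ j, ∃ k, boxEdge r gedge e' k = q j := by
    intro j
    have hq : q j ∈ hedgeSet r (boxEdge r gedge) e' := by
      rw [← h]
      simp only [Finset.mem_image, Finset.mem_univ, true_and]
      exact ⟨j, rfl⟩
    unfold hedgeSet at hq
    simp only [Finset.mem_image, Finset.mem_univ, true_and] at hq
    exact hq
  have hsur : ∀ k, ∃ j, q j = boxEdge r gedge e' k := by
    intro k
    have hb : boxEdge r gedge e' k ∈ Finset.image q Finset.univ := by
      rw [h]
      unfold hedgeSet
      simp only [Finset.mem_image, Finset.mem_univ, true_and]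
      exact ⟨k, rfl⟩
    simp only [Finset.mem_image, Finset.mem_univ, true_and] at hb
    obtain ⟨j, hj⟩ := hb
    exact ⟨j, hj⟩
  choose t ht using hmem
  have hbe : Function.Injective (boxEdge r gedge e') := by
    rcases e' with ⟨f, y⟩ | ⟨x, f⟩
    · intro a b hab; exact hinj f (congrArg Prod.fst hab)
    · intro a b hab; exact hinj f (congrArg Prod.snd hab)
  have htsurj : Function.Surjective t := by
    intro k
    obtain ⟨j, hj⟩ := hsur k
    exact ⟨j, hbe ((ht j).trans hj)⟩
  have htbij : Function.Bijective t := ⟨Finite.injective_iff_surjective.mpr htsurj, htsurj⟩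
  rcases e' with ⟨f, y⟩ | ⟨x, f⟩
  · exact Or.inl ⟨f, y, t, htbij, fun j => (ht j).symm⟩
  · exact Or.inr ⟨x, f, t, htbij, fun j => (ht j).symm⟩

lemma image_line_row {γ E : Type} [DecidableEq γ] [Fintype γ] (r : ℕ)
    (φ : Fin r × Fin r → γ) (i : Fin r) (edge : E → Fin r → γ) (e : E)
    (t : Fin r → Fin r) (ht : Function.Surjective t)
    (h : ∀ j, φ (i, j) = edge e (t j)) :
    Finset.image φ (hedgeSet r (gridEdge r) (Sum.inl i)) = hedgeSet r edge e := by
  ext w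
  unfold hedgeSet
  simp only [Finset.mem_image, Finset.mem_univ, true_and]
  constructor
  · rintro ⟨p, ⟨j, rfl⟩, rfl⟩
    exact ⟨t j, (h j).symm⟩
  · rintro ⟨k, rfl⟩
    obtain ⟨j, rfl⟩ := ht k
    exact ⟨gridEdge r (Sum.inl i) j, ⟨j, rfl⟩, h j⟩

lemma image_line_col {γ E : Type} [DecidableEq γ] [Fintype γ] (r : ℕ)
    (φ : Fin r × Fin r → γ) (j : Fin r) (edge : E → Fin r → γ) (e : E)
    (t : Fin r → Fin r) (ht : Function.Surjective t)
    (h : ∀ i, φ (i, j) = edge e (t i)) :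
    Finset.image φ (hedgeSet r (gridEdge r) (Sum.inr j)) = hedgeSet r edge e := by
  ext w
  unfold hedgeSet
  simp only [Finset.mem_image, Finset.mem_univ, true_and]
  constructor
  · rintro ⟨p, ⟨i, rfl⟩, rfl⟩
    exact ⟨t i, (h i).symm⟩
  · rintro ⟨k, rfl⟩
    obtain ⟨i, rfl⟩ := ht k
    exact ⟨gridEdge r (Sum.inr j) i, ⟨i, rfl⟩, h i⟩

end Helpers

set_option linter.unusedSectionVars false

section Main
variable {W F : Type} [Fintype W] [Fintype F]

lemma allV_main (r : ℕ) (hr : 3 ≤ r) (gedge : F → Fin r → W)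
    (hinj : ∀ f, Function.Injective (gedge f))
    (hlinear : ∀ f f' : F, f ≠ f' →
      (hedgeSet r gedge f ∩ hedgeSet r gedge f').card ≤ 1)
    (htriangle : ¬ ∃ f₁ f₂ f₃ : F,
      (hedgeSet r gedge f₁ ∩ hedgeSet r gedge f₂).card = 1 ∧
      (hedgeSet r gedge f₁ ∩ hedgeSet r gedge f₃).card = 1 ∧
      (hedgeSet r gedge f₂ ∩ hedgeSet r gedge f₃).card = 1 ∧
      hedgeSet r gedge f₁ ∩ hedgeSet r gedge f₂ ∩ hedgeSet r gedge f₃ = ∅)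
    (hgridfree : ¬ ∃ ψ : Fin r × Fin r → W, Function.Injective ψ ∧
      ∀ e : Fin r ⊕ Fin r, ∃ f : F,
        Finset.image ψ (hedgeSet r (gridEdge r) e) = hedgeSet r gedge f)
    (π : Fin r × Fin r → W × W)
    (hcol : ∀ j : Fin r,
      (∃ f c t, Function.Bijective t ∧ ∀ i, π (i, j) = (gedge f (t i), c)) ∨
      (∃ c f t, Function.Bijective t ∧ ∀ i, π (i, j) = (c, gedge f (t i))))
    (c : Fin r → W) (f : Fin r → F) (t : Fin r → Fin r → Fin r)
    (hbij : ∀ i, Function.Bijective (t i))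
    (hrow : ∀ i j, π (i, j) = (c i, gedge (f i) (t i j))) :
    (∃ e' : F × W ⊕ W × F, ∀ e : Fin r ⊕ Fin r,
      Finset.image π (hedgeSet r (gridEdge r) e) = hedgeSet r (boxEdge r gedge) e') ∨
    (∃ x y : Fin r → W,
      (∃ fx : F, Finset.image x Finset.univ = hedgeSet r gedge fx) ∧
      (∃ fy : F, Finset.image y Finset.univ = hedgeSet r gedge fy) ∧
      (∀ i j : Fin r, π (i, j) = (x i, y j))) := by
  have h0r : 0 < r := by omega
  have h1r : 1 < r := by omega
  have h2r : 2 < r := by omega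
  set i0 : Fin r := ⟨0, h0r⟩ with hi0
  set i1 : Fin r := ⟨1, h1r⟩ with hi1
  set i2 : Fin r := ⟨2, h2r⟩ with hi2
  have h01 : i0 ≠ i1 := by simp [hi0, hi1, Fin.ext_iff]
  have h02 : i0 ≠ i2 := by simp [hi0, hi2, Fin.ext_iff]
  have h12 : i1 ≠ i2 := by simp [hi1, hi2, Fin.ext_iff]
  by_cases hcinj : Function.Injective c
  · -- all columns are horizontal: second type
    have hcolH : ∀ j, ∃ f' c' t', Function.Bijective t' ∧
        ∀ i, π (i, j) = (gedge f' (t' i), c') := by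
      intro j
      rcases hcol j with h | ⟨c', f', t', _, hV⟩
      · exact h
      · exfalso
        have e0 : c i0 = c' := congrArg Prod.fst ((hrow i0 j).symm.trans (hV i0))
        have e1 : c i1 = c' := congrArg Prod.fst ((hrow i1 j).symm.trans (hV i1))
        exact h01 (hcinj (e0.trans e1.symm))
    choose fe ce te htebij hH using hcolH
    right
    refine ⟨c, ce, ⟨fe i0, ?_⟩, ⟨f i0, ?_⟩, ?_⟩
    · have hc : ∀ i, c i = gedge (fe i0) (te i0 i) :=
        fun i => congrArg Prod.fst ((hrow i i0).symm.trans (hH i0 i))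
      rw [show c = fun i => gedge (fe i0) (te i0 i) from funext hc]
      exact image_surj_comp _ (htebij i0).2
    · have hd : ∀ j, ce j = gedge (f i0) (t i0 j) :=
        fun j => (congrArg Prod.snd ((hrow i0 j).symm.trans (hH j i0))).symm
      rw [show ce = fun j => gedge (f i0) (t i0 j) from funext hd]
      exact image_surj_comp _ (hbij i0).2
    · intro i j
      have h1 : (π (i, j)).1 = c i := by rw [hrow]
      have h2 : (π (i, j)).2 = ce j := by rw [hH j i]
      exact Prod.ext_iff.mpr ⟨h1, h2⟩
  · -- c not injective: all columns vertical, first type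
    obtain ⟨a0, a1, hceq, hane⟩ := Function.not_injective_iff.mp hcinj
    have hcolV : ∀ j, ∃ c' g s, Function.Bijective s ∧
        ∀ i, π (i, j) = (c', gedge g (s i)) := by
      intro j
      rcases hcol j with ⟨f', c', t', htb, hHH⟩ | h
      · exfalso
        have e0 : gedge f' (t' a0) = c a0 := (congrArg Prod.fst ((hrow a0 j).symm.trans (hHH a0))).symm
        have e1 : gedge f' (t' a1) = c a1 := (congrArg Prod.fst ((hrow a1 j).symm.trans (hHH a1))).symm
        exact hane (htb.1 (hinj f' (e0.trans (hceq.trans e1.symm))))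
      · exact h
    choose cc g s hsbij hV using hcolV
    have hcconst : ∀ i, c i = cc i0 :=
      fun i => congrArg Prod.fst ((hrow i i0).symm.trans (hV i0 i))
    have hccconst : ∀ j, cc j = cc i0 := by
      intro j
      have h1 : c i0 = cc j := congrArg Prod.fst ((hrow i0 j).symm.trans (hV j i0))
      exact h1.symm.trans (hcconst i0)
    set b : Fin r → Fin r → W := fun i j => gedge (f i) (t i j) with hbdef
    have hb2 : ∀ i j, b i j = gedge (g j) (s j i) :=
      fun i j => congrArg Prod.snd ((hrow i j).symm.trans (hV j i))
    have hbS : ∀ i j, b i j ∈ hedgeSet r gedge (f i) := by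
      intro i j
      unfold hedgeSet
      simp only [Finset.mem_image, Finset.mem_univ, true_and]
      exact ⟨t i j, rfl⟩
    have hbT : ∀ i j, b i j ∈ hedgeSet r gedge (g j) := by
      intro i j
      rw [hb2]
      unfold hedgeSet
      simp only [Finset.mem_image, Finset.mem_univ, true_and]
      exact ⟨s j i, rfl⟩
    have rowinj : ∀ i j j', b i j = b i j' → j = j' :=
      fun i j j' h => (hbij i).1 (hinj (f i) h)
    have colinj : ∀ j i i', b i j = b i' j → i = i' := by
      intro j i i' h
      rw [hb2, hb2] at h
      exact (hsbij j).1 (hinj (g j) h)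
    have hsets : ∀ p q : F, p ≠ q → ∀ w w' : W,
        w ∈ hedgeSet r gedge p → w ∈ hedgeSet r gedge q →
        w' ∈ hedgeSet r gedge p → w' ∈ hedgeSet r gedge q → w = w' := by
      intro p q hpq w w' h1 h2 h3 h4
      exact Finset.card_le_one.mp (hlinear p q hpq) w (Finset.mem_inter.mpr ⟨h1, h2⟩)
        w' (Finset.mem_inter.mpr ⟨h3, h4⟩)
    have hone : ∀ p q : F, p ≠ q → ∀ w : W,
        w ∈ hedgeSet r gedge p → w ∈ hedgeSet r gedge q →
        hedgeSet r gedge p ∩ hedgeSet r gedge q = {w} := by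
      intro p q hpq w h1 h2
      apply Finset.eq_singleton_iff_unique_mem.mpr
      refine ⟨Finset.mem_inter.mpr ⟨h1, h2⟩, fun x hx => ?_⟩
      exact hsets p q hpq x w (Finset.mem_inter.mp hx).1 (Finset.mem_inter.mp hx).2 h1 h2
    have hcard1 : ∀ p q : F, p ≠ q → ∀ w : W,
        w ∈ hedgeSet r gedge p → w ∈ hedgeSet r gedge q →
        (hedgeSet r gedge p ∩ hedgeSet r gedge q).card = 1 := by
      intro p q hpq w h1 h2
      rw [hone p q hpq w h1 h2]
      exact Finset.card_singleton w
    -- core claim: all row edges are equal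
    have hfeq : ∀ a a' : Fin r, f a = f a' := by
      intro a a'
      by_contra hfne
      by_cases hpe : ∃ w, w ∈ hedgeSet r gedge (f a) ∧ w ∈ hedgeSet r gedge (f a')
      · obtain ⟨p, hp1, hp2⟩ := hpe
        have key : ∀ j, b a j = p ∨ b a' j = p := by
          intro j
          by_cases hg1 : g j = f a
          · exact Or.inr (hsets (f a') (f a) (Ne.symm hfne) (b a' j) p (hbS a' j)
              (by rw [← hg1]; exact hbT a' j) hp2 hp1)
          by_cases hg2 : g j = f a'
          · exact Or.inl (hsets (f a) (f a') hfne (b a j) p (hbS a j)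
              (by rw [← hg2]; exact hbT a j) hp1 hp2)
          · by_contra hno
            push_neg at hno
            obtain ⟨hn1, hn2⟩ := hno
            apply htriangle
            refine ⟨f a, f a', g j, hcard1 _ _ hfne p hp1 hp2,
              hcard1 _ _ (fun h => hg1 h.symm) (b a j) (hbS a j) (hbT a j),
              hcard1 _ _ (fun h => hg2 h.symm) (b a' j) (hbS a' j) (hbT a' j), ?_⟩
            rw [hone _ _ hfne p hp1 hp2]
            apply Finset.singleton_inter_of_notMem
            intro hpT
            exact hn1 (hsets (f a) (g j) (fun h => hg1 h.symm) (b a j) p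
              (hbS a j) (hbT a j) hp1 hpT)
        rcases key i0 with k0 | k0 <;> rcases key i1 with k1 | k1 <;> rcases key i2 with k2 | k2
        · exact h01 (rowinj a i0 i1 (k0.trans k1.symm))
        · exact h01 (rowinj a i0 i1 (k0.trans k1.symm))
        · exact h02 (rowinj a i0 i2 (k0.trans k2.symm))
        · exact h12 (rowinj a' i1 i2 (k1.trans k2.symm))
        · exact h12 (rowinj a i1 i2 (k1.trans k2.symm))
        · exact h02 (rowinj a' i0 i2 (k0.trans k2.symm))
        · exact h01 (rowinj a' i0 i1 (k0.trans k1.symm))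
        · exact h01 (rowinj a' i0 i1 (k0.trans k1.symm))
      · push_neg at hpe
        have hdisj : ∀ w, w ∈ hedgeSet r gedge (f a) → w ∈ hedgeSet r gedge (f a') → False :=
          fun w h1 h2 => hpe w h1 h2
        have ha1 : ∀ j, g j ≠ f a ∧ g j ≠ f a' := by
          intro j
          constructor
          · intro h; exact hdisj (b a' j) (by rw [← h]; exact hbT a' j) (hbS a' j)
          · intro h; exact hdisj (b a j) (hbS a j) (by rw [← h]; exact hbT a j)
        have ha2 : Function.Injective g := by
          intro j j' hgg
          apply rowinj a
          exact hsets (f a) (g j) (fun h => (ha1 j).1 h.symm) (b a j) (b a j')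
            (hbS a j) (hbT a j) (hbS a j') (by rw [hgg]; exact hbT a j')
        have ha3 : ∀ j j', j ≠ j' → ∀ w, w ∈ hedgeSet r gedge (g j) →
            w ∈ hedgeSet r gedge (g j') → False := by
          intro j j' hjj w hw hw'
          apply htriangle
          have hgne : g j ≠ g j' := fun h => hjj (ha2 h)
          refine ⟨f a, g j, g j',
            hcard1 _ _ (fun h => (ha1 j).1 h.symm) (b a j) (hbS a j) (hbT a j),
            hcard1 _ _ (fun h => (ha1 j').1 h.symm) (b a j') (hbS a j') (hbT a j'),
            hcard1 _ _ hgne w hw hw', ?_⟩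
          rw [hone _ _ (fun h => (ha1 j).1 h.symm) (b a j) (hbS a j) (hbT a j)]
          apply Finset.singleton_inter_of_notMem
          intro hmem
          exact hjj (rowinj a j j' (hsets (f a) (g j') (fun h => (ha1 j').1 h.symm)
            (b a j) (b a j') (hbS a j) hmem (hbS a j') (hbT a j')))
        have ha4 : ∀ i i', i ≠ i' → f i ≠ f i' := by
          intro i i' hii hff
          have hcol0 : g i0 = f i := by
            by_contra hgf
            exact hii (colinj i0 i i' (hsets (f i) (g i0) (fun h => hgf h.symm)
              (b i i0) (b i' i0) (hbS i i0) (hbT i i0)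
              (by rw [hff]; exact hbS i' i0) (hbT i' i0)))
          have hcol1 : g i1 = f i := by
            by_contra hgf
            exact hii (colinj i1 i i' (hsets (f i) (g i1) (fun h => hgf h.symm)
              (b i i1) (b i' i1) (hbS i i1) (hbT i i1)
              (by rw [hff]; exact hbS i' i1) (hbT i' i1)))
          exact h01 (ha2 (hcol0.trans hcol1.symm))
        have ha5 : ∀ i i', i ≠ i' → ∀ w, w ∈ hedgeSet r gedge (f i) →
            w ∈ hedgeSet r gedge (f i') → False := by
          intro i i' hii w hw hw'
          have hfne2 : f i ≠ f i' := ha4 i i' hii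
          obtain ⟨j, hwj⟩ : ∃ j, w ∉ hedgeSet r gedge (g j) := by
            by_cases h : w ∈ hedgeSet r gedge (g i0)
            · exact ⟨i1, fun hh => ha3 i0 i1 h01 w h hh⟩
            · exact ⟨i0, h⟩
          have hg1 : g j ≠ f i := fun h => hwj (by rw [h]; exact hw)
          have hg2 : g j ≠ f i' := fun h => hwj (by rw [h]; exact hw')
          apply htriangle
          refine ⟨f i, f i', g j, hcard1 _ _ hfne2 w hw hw',
            hcard1 _ _ (fun h => hg1 h.symm) (b i j) (hbS i j) (hbT i j),
            hcard1 _ _ (fun h => hg2 h.symm) (b i' j) (hbS i' j) (hbT i' j), ?_⟩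
          rw [hone _ _ hfne2 w hw hw']
          exact Finset.singleton_inter_of_notMem hwj
        apply hgridfree
        refine ⟨fun p => b p.1 p.2, ?_, ?_⟩
        · intro p q hpq
          have hpq' : b p.1 p.2 = b q.1 q.2 := hpq
          have hi : p.1 = q.1 := by
            by_contra hne
            exact ha5 p.1 q.1 hne (b p.1 p.2) (hbS p.1 p.2) (by rw [hpq']; exact hbS q.1 q.2)
          have hj : p.2 = q.2 := by
            by_contra hne
            exact ha3 p.2 q.2 hne (b p.1 p.2) (hbT p.1 p.2) (by rw [hpq']; exact hbT q.1 q.2)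
          exact Prod.ext_iff.mpr ⟨hi, hj⟩
        · intro e
          rcases e with i | j
          · exact ⟨f i, image_line_row r _ i gedge (f i) (t i) (hbij i).2 (fun j => rfl)⟩
          · exact ⟨g j, image_line_col r _ j gedge (g j) (s j) (hsbij j).2 (fun i => hb2 i j)⟩
    -- all column edges equal the common row edge
    have hgeq : ∀ j, g j = f i0 := by
      intro j
      by_contra hne
      have hsub : hedgeSet r gedge (g j) ⊆ hedgeSet r gedge (f i0) := by
        intro w hw
        unfold hedgeSet at hw
        simp only [Finset.mem_image, Finset.mem_univ, true_and] at hw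
        obtain ⟨k, hk⟩ := hw
        obtain ⟨i, hi⟩ := (hsbij j).2 k
        have hwb : w = b i j := by rw [hb2 i j, hi, hk]
        have hmem := hbS i j
        rw [hfeq i i0] at hmem
        rw [hwb]
        exact hmem
      have hc1 : (hedgeSet r gedge (g j) ∩ hedgeSet r gedge (f i0)).card ≤ 1 :=
        hlinear _ _ hne
      rw [Finset.inter_eq_left.mpr hsub, hedge_card r gedge hinj (g j)] at hc1
      omega
    left
    refine ⟨Sum.inr (cc i0, f i0), fun e => ?_⟩
    rcases e with i | j
    · refine image_line_row r π i (boxEdge r gedge) (Sum.inr (cc i0, f i0)) (t i) (hbij i).2 ?_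
      intro j
      rw [hrow i j, hcconst i, hfeq i i0]
      rfl
    · refine image_line_col r π j (boxEdge r gedge) (Sum.inr (cc i0, f i0)) (s j) (hsbij j).2 ?_
      intro i
      rw [hV j i, hccconst j, hgeq j]
      rfl

end Main


/-- Let `r ≥ 3` and let `G` be a linear `r`-graph containing neither a triangle nor
the grid `H_r` as a subgraph. Then every homomorphism `π` from `H_r` to `G □ G`
either maps all of `H_r` into a single (horizontal or vertical) edge of `G □ G`, or
maps the vertices `(i,j)` of `H_r` to vertices `(x i, y j)` of `G □ G` (or, after
swapping the roles of rows and columns, to `(x j, y i)`), where `{x₁,…,x_r}` and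
`{y₁,…,y_r}` are edges of `G`. -/
theorem grid_hom_to_box_classification
    {W F : Type} [Fintype W] [Fintype F] (r : ℕ) (hr : 3 ≤ r)
    (gedge : F → Fin r → W) (hinj : ∀ f, Function.Injective (gedge f))
    (hlinear : ∀ f f' : F, f ≠ f' →
      (hedgeSet r gedge f ∩ hedgeSet r gedge f').card ≤ 1)
    (htriangle : ¬ ∃ f₁ f₂ f₃ : F,
      (hedgeSet r gedge f₁ ∩ hedgeSet r gedge f₂).card = 1 ∧
      (hedgeSet r gedge f₁ ∩ hedgeSet r gedge f₃).card = 1 ∧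
      (hedgeSet r gedge f₂ ∩ hedgeSet r gedge f₃).card = 1 ∧
      hedgeSet r gedge f₁ ∩ hedgeSet r gedge f₂ ∩ hedgeSet r gedge f₃ = ∅)
    (hgridfree : ¬ ∃ ψ : Fin r × Fin r → W, Function.Injective ψ ∧
      ∀ e : Fin r ⊕ Fin r, ∃ f : F,
        Finset.image ψ (hedgeSet r (gridEdge r) e) = hedgeSet r gedge f)
    (π : Fin r × Fin r → W × W)
    (hhom : ∀ e : Fin r ⊕ Fin r, ∃ e' : F × W ⊕ W × F,
      Finset.image π (hedgeSet r (gridEdge r) e) = hedgeSet r (boxEdge r gedge) e') :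
    -- first type: `π` maps all of `H_r` into a single edge of `G □ G`
    (∃ e' : F × W ⊕ W × F, ∀ e : Fin r ⊕ Fin r,
      Finset.image π (hedgeSet r (gridEdge r) e) = hedgeSet r (boxEdge r gedge) e') ∨
    -- second type: `π (i,j) = (x i, y j)` with `x`, `y` enumerating edges of `G`
    (∃ x y : Fin r → W,
      (∃ fx : F, Finset.image x Finset.univ = hedgeSet r gedge fx) ∧
      (∃ fy : F, Finset.image y Finset.univ = hedgeSet r gedge fy) ∧
      (∀ i j : Fin r, π (i, j) = (x i, y j))) ∨
    -- second type with the roles of rows and columns swapped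
    (∃ x y : Fin r → W,
      (∃ fx : F, Finset.image x Finset.univ = hedgeSet r gedge fx) ∧
      (∃ fy : F, Finset.image y Finset.univ = hedgeSet r gedge fy) ∧
      (∀ i j : Fin r, π (i, j) = (x j, y i))) := by
  have hrowdat : ∀ i : Fin r,
      (∃ f c t, Function.Bijective t ∧ ∀ j, π (i, j) = (gedge f (t j), c)) ∨
      (∃ c f t, Function.Bijective t ∧ ∀ j, π (i, j) = (c, gedge f (t j))) := by
    intro i
    obtain ⟨e', he'⟩ := hhom (Sum.inl i)
    apply line_struct r gedge hinj (fun j => π (i, j)) e'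
    rw [← he']
    ext w
    unfold hedgeSet
    simp only [Finset.mem_image, Finset.mem_univ, true_and]
    constructor
    · rintro ⟨j, rfl⟩
      exact ⟨gridEdge r (Sum.inl i) j, ⟨j, rfl⟩, rfl⟩
    · rintro ⟨p, ⟨j, rfl⟩, rfl⟩
      exact ⟨j, rfl⟩
  have hcoldat : ∀ j : Fin r,
      (∃ f c t, Function.Bijective t ∧ ∀ i, π (i, j) = (gedge f (t i), c)) ∨
      (∃ c f t, Function.Bijective t ∧ ∀ i, π (i, j) = (c, gedge f (t i))) := by
    intro j
    obtain ⟨e', he'⟩ := hhom (Sum.inr j)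
    apply line_struct r gedge hinj (fun i => π (i, j)) e'
    rw [← he']
    ext w
    unfold hedgeSet
    simp only [Finset.mem_image, Finset.mem_univ, true_and]
    constructor
    · rintro ⟨i, rfl⟩
      exact ⟨gridEdge r (Sum.inr j) i, ⟨i, rfl⟩, rfl⟩
    · rintro ⟨p, ⟨i, rfl⟩, rfl⟩
      exact ⟨i, rfl⟩
  by_cases hallV : ∀ i : Fin r, ∃ c f t, Function.Bijective t ∧
      ∀ j, π (i, j) = (c, gedge f (t j))
  · choose c f t hbij hfor using hallV
    rcases allV_main r hr gedge hinj hlinear htriangle hgridfree π hcoldat c f t hbij hfor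
      with h | h
    · exact Or.inl h
    · exact Or.inr (Or.inl h)
  · by_cases hallH : ∀ i : Fin r, ∃ f c t, Function.Bijective t ∧
        ∀ j, π (i, j) = (gedge f (t j), c)
    · -- all rows horizontal: apply the vertical case to the swapped map
      set π₂ : Fin r × Fin r → W × W := fun p => Prod.swap (π p) with hπ₂
      have hrow₂ : ∀ i : Fin r, ∃ c f t, Function.Bijective t ∧
          ∀ j, π₂ (i, j) = (c, gedge f (t j)) := by
        intro i
        obtain ⟨f, cst, t, ht, h⟩ := hallH i
        exact ⟨cst, f, t, ht, fun j => by
          show Prod.swap (π (i, j)) = _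
          rw [h j]; rfl⟩
      choose c f t hbij hfor using hrow₂
      have hcol₂ : ∀ j : Fin r,
          (∃ f c t, Function.Bijective t ∧ ∀ i, π₂ (i, j) = (gedge f (t i), c)) ∨
          (∃ c f t, Function.Bijective t ∧ ∀ i, π₂ (i, j) = (c, gedge f (t i))) := by
        intro j
        rcases hcoldat j with ⟨f', c', t', ht, h⟩ | ⟨c', f', t', ht, h⟩
        · exact Or.inr ⟨c', f', t', ht, fun i => by
            show Prod.swap (π (i, j)) = _
            rw [h i]; rfl⟩
        · exact Or.inl ⟨f', c', t', ht, fun i => by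
            show Prod.swap (π (i, j)) = _
            rw [h i]; rfl⟩
      have hswap : ∀ s : Finset (Fin r × Fin r),
          Finset.image π s = Finset.image Prod.swap (Finset.image π₂ s) := by
        intro s
        rw [Finset.image_image]
        apply Finset.image_congr
        intro p _
        show π p = Prod.swap (Prod.swap (π p))
        rw [Prod.swap_swap]
      rcases allV_main r hr gedge hinj hlinear htriangle hgridfree π₂ hcol₂ c f t hbij hfor
        with ⟨E', hE⟩ | ⟨x, y, hfx, hfy, hxy⟩
      · left
        rcases E' with ⟨fe, yv⟩ | ⟨xv, fe⟩
        · refine ⟨Sum.inr (yv, fe), fun e => ?_⟩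
          rw [hswap, hE e]
          ext w
          unfold hedgeSet
          simp only [Finset.mem_image, Finset.mem_univ, true_and]
          constructor
          · rintro ⟨p, ⟨k, rfl⟩, rfl⟩
            exact ⟨k, rfl⟩
          · rintro ⟨k, rfl⟩
            exact ⟨boxEdge r gedge (Sum.inl (fe, yv)) k, ⟨k, rfl⟩, rfl⟩
        · refine ⟨Sum.inl (fe, xv), fun e => ?_⟩
          rw [hswap, hE e]
          ext w
          unfold hedgeSet
          simp only [Finset.mem_image, Finset.mem_univ, true_and]
          constructor
          · rintro ⟨p, ⟨k, rfl⟩, rfl⟩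
            exact ⟨k, rfl⟩
          · rintro ⟨k, rfl⟩
            exact ⟨boxEdge r gedge (Sum.inr (xv, fe)) k, ⟨k, rfl⟩, rfl⟩
      · right; right
        refine ⟨y, x, hfy, hfx, fun i j => ?_⟩
        have h2 : Prod.swap (π₂ (i, j)) = (y j, x i) := by rw [hxy i j]; rfl
        rw [show π₂ (i, j) = Prod.swap (π (i, j)) from rfl, Prod.swap_swap] at h2
        exact h2
    · -- mixed rows: impossible
      exfalso
      obtain ⟨iH, hnotV⟩ := not_forall.mp hallV
      obtain ⟨iV, hnotH⟩ := not_forall.mp hallH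
      obtain ⟨f', c', t', ht', hH⟩ := (hrowdat iH).resolve_right hnotV
      obtain ⟨c, f, t, ht, hV⟩ := (hrowdat iV).resolve_left hnotH
      have key : ∀ j, gedge f (t j) = c' ∨ gedge f' (t' j) = c := by
        intro j
        rcases hcoldat j with ⟨fj, cj, tj, _, hcj⟩ | ⟨cj, gj, sj, _, hcj⟩
        · left
          have e1 : gedge f (t j) = cj := congrArg Prod.snd ((hV j).symm.trans (hcj iV))
          have e2 : c' = cj := congrArg Prod.snd ((hH j).symm.trans (hcj iH))
          exact e1.trans e2.symm
        · right
          have e1 : gedge f' (t' j) = cj := congrArg Prod.fst ((hH j).symm.trans (hcj iH))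
          have e2 : c = cj := congrArg Prod.fst ((hV j).symm.trans (hcj iV))
          exact e1.trans e2.symm
      have h0r : 0 < r := by omega
      have h1r : 1 < r := by omega
      have h2r : 2 < r := by omega
      set j0 : Fin r := ⟨0, h0r⟩ with hj0
      set j1 : Fin r := ⟨1, h1r⟩ with hj1
      set j2 : Fin r := ⟨2, h2r⟩ with hj2
      have h01 : j0 ≠ j1 := by simp [hj0, hj1, Fin.ext_iff]
      have h02 : j0 ≠ j2 := by simp [hj0, hj2, Fin.ext_iff]
      have h12 : j1 ≠ j2 := by simp [hj1, hj2, Fin.ext_iff]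
      have rinj1 : ∀ j j', gedge f (t j) = gedge f (t j') → j = j' :=
        fun j j' h => ht.1 (hinj f h)
      have rinj2 : ∀ j j', gedge f' (t' j) = gedge f' (t' j') → j = j' :=
        fun j j' h => ht'.1 (hinj f' h)
      rcases key j0 with k0 | k0 <;> rcases key j1 with k1 | k1 <;> rcases key j2 with k2 | k2
      · exact h01 (rinj1 j0 j1 (k0.trans k1.symm))
      · exact h01 (rinj1 j0 j1 (k0.trans k1.symm))
      · exact h02 (rinj1 j0 j2 (k0.trans k2.symm))
      · exact h12 (rinj2 j1 j2 (k1.trans k2.symm))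
      · exact h12 (rinj1 j1 j2 (k1.trans k2.symm))
      · exact h02 (rinj2 j0 j2 (k0.trans k2.symm))
      · exact h01 (rinj2 j0 j1 (k0.trans k1.symm))
      · exact h01 (rinj2 j0 j1 (k0.trans k1.symm))
end
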